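/- arXiv:2505.09552 — 6 statements merged into one kernel-verified Lean document; each statement's English description precedes it below -/
import Mathlib

section
/- Let M = Σ^{-1} + Z^T W Z with block structure M = [[D1, Z1^T W Z2],[Z2^T W Z1, D2]], where D1, D2 are the diagonal blocks (which are themselves diagonal matrices), and let L = [[0,0],[Z2^T W Z1, 0]] be the strictly lower-triangular block part and D = diag(D1, D2). Then the SSOR-preconditioned matrix satisfies P^{-1/2} M P^{-T/2} = I_m − [[0,0],[0, D2^{-1/2} Z2^T W Z1 D1^{-1} Z1^T W Z2 D2^{-1/2}]], where P = (L+D) D^{-1} (L+D)^T and P^{-1/2} = D^{1/2}(L+D)^{-1}. -/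
open Matrix Finset

/-- SSOR block identity: for `K = 2` crossed random effects with
`M = Σ⁻¹ + Zᵀ W Z = [[D1, Z1ᵀWZ2],[Z2ᵀWZ1, D2]]` (the diagonal blocks `D1, D2` being
diagonal matrices), `L` the strictly lower block-triangular part and `D = diag(D1,D2)`,
the SSOR preconditioner `P = (L+D)D⁻¹(L+D)ᵀ` with `P^{-1/2} = D^{1/2}(L+D)⁻¹` satisfies
`P^{-1/2} M P^{-T/2} = I − [[0,0],[0, D2^{-1/2} Z2ᵀWZ1 D1⁻¹ Z1ᵀWZ2 D2^{-1/2}]]`. -/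
theorem stmt2 {n m1 m2 : ℕ}
    (w : Fin n → ℝ) (sinv : Fin m1 ⊕ Fin m2 → ℝ)
    (Z1 : Matrix (Fin n) (Fin m1) ℝ) (Z2 : Matrix (Fin n) (Fin m2) ℝ)
    (hw : ∀ k, 0 < w k) (hs : ∀ i, 0 < sinv i)
    -- the diagonal blocks of `M` are diagonal matrices
    (hdiag1 : ∀ i j : Fin m1, i ≠ j → (Z1ᵀ * Matrix.diagonal w * Z1) i j = 0)
    (hdiag2 : ∀ i j : Fin m2, i ≠ j → (Z2ᵀ * Matrix.diagonal w * Z2) i j = 0)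
    (M : Matrix (Fin m1 ⊕ Fin m2) (Fin m1 ⊕ Fin m2) ℝ)
    (hM : M = Matrix.diagonal sinv
        + (fromCols Z1 Z2)ᵀ * Matrix.diagonal w * fromCols Z1 Z2)
    (d : Fin m1 ⊕ Fin m2 → ℝ) (hd : ∀ i, d i = M i i)
    (L : Matrix (Fin m1 ⊕ Fin m2) (Fin m1 ⊕ Fin m2) ℝ)
    (hL : L = fromBlocks 0 0 (Z2ᵀ * Matrix.diagonal w * Z1) 0) :
    Matrix.diagonal (fun i => Real.sqrt (d i)) * (L + Matrix.diagonal d)⁻¹ * M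
        * ((L + Matrix.diagonal d)⁻¹)ᵀ * Matrix.diagonal (fun i => Real.sqrt (d i))
      = 1 - fromBlocks 0 0 0
          (Matrix.diagonal (fun j : Fin m2 => (Real.sqrt (d (Sum.inr j)))⁻¹)
            * (Z2ᵀ * Matrix.diagonal w * Z1)
            * Matrix.diagonal (fun i : Fin m1 => (d (Sum.inl i))⁻¹)
            * (Z1ᵀ * Matrix.diagonal w * Z2)
            * Matrix.diagonal (fun j : Fin m2 => (Real.sqrt (d (Sum.inr j)))⁻¹)) := by
  set B := Z2ᵀ * Matrix.diagonal w * Z1 with hB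
  have hBt : Bᵀ = Z1ᵀ * Matrix.diagonal w * Z2 := by
    rw [hB]
    simp [Matrix.transpose_mul, Matrix.diagonal_transpose, Matrix.mul_assoc]
  -- positivity of d
  have hdpos : ∀ i, 0 < d i := by
    intro i
    have h0 : 0 ≤ ((fromCols Z1 Z2)ᵀ * Matrix.diagonal w * fromCols Z1 Z2) i i := by
      rw [Matrix.mul_assoc, Matrix.mul_apply]
      refine Finset.sum_nonneg fun k _ => ?_
      rw [Matrix.diagonal_mul, Matrix.transpose_apply]
      nlinarith [(hw k).le, sq_nonneg (fromCols Z1 Z2 k i)]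
    have hdi := hd i
    rw [hM, Matrix.add_apply, Matrix.diagonal_apply_eq] at hdi
    have := hs i
    linarith
  have hdne : ∀ i, d i ≠ 0 := fun i => (hdpos i).ne'
  have hsqrt : ∀ i, Real.sqrt (d i) * Real.sqrt (d i) = d i :=
    fun i => Real.mul_self_sqrt (hdpos i).le
  have hsqne : ∀ i, Real.sqrt (d i) ≠ 0 := fun i => (Real.sqrt_pos.mpr (hdpos i)).ne'
  -- block form of M
  have hMblk0 : M = fromBlocks
      (Matrix.diagonal (fun i => sinv (Sum.inl i)) + Z1ᵀ * Matrix.diagonal w * Z1) Bᵀ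
      B (Matrix.diagonal (fun j => sinv (Sum.inr j)) + Z2ᵀ * Matrix.diagonal w * Z2) := by
    have hsinv : Matrix.diagonal sinv = fromBlocks
        (Matrix.diagonal fun i => sinv (Sum.inl i)) 0 0
        (Matrix.diagonal fun j => sinv (Sum.inr j)) := by
      rw [Matrix.fromBlocks_diagonal]
      congr 1
      funext i
      cases i <;> rfl
    rw [hM, transpose_fromCols, fromRows_mul, fromRows_mul_fromCols, hsinv,
      Matrix.fromBlocks_add, hBt, hB]
    congr 1 <;> simp [Matrix.mul_assoc]
  have hD1 : Matrix.diagonal (fun i => sinv (Sum.inl i)) + Z1ᵀ * Matrix.diagonal w * Z1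
      = Matrix.diagonal (fun i : Fin m1 => d (Sum.inl i)) := by
    ext i j
    rcases eq_or_ne i j with rfl | hne
    · have hdi := hd (Sum.inl i)
      rw [hMblk0, Matrix.fromBlocks_apply₁₁] at hdi
      rw [Matrix.diagonal_apply_eq]
      exact hdi.symm
    · rw [Matrix.add_apply, Matrix.diagonal_apply_ne _ hne, Matrix.diagonal_apply_ne _ hne,
        hdiag1 i j hne, add_zero]
  have hD2 : Matrix.diagonal (fun j => sinv (Sum.inr j)) + Z2ᵀ * Matrix.diagonal w * Z2
      = Matrix.diagonal (fun j : Fin m2 => d (Sum.inr j)) := by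
    ext i j
    rcases eq_or_ne i j with rfl | hne
    · have hdi := hd (Sum.inr i)
      rw [hMblk0, Matrix.fromBlocks_apply₂₂] at hdi
      rw [Matrix.diagonal_apply_eq]
      exact hdi.symm
    · rw [Matrix.add_apply, Matrix.diagonal_apply_ne _ hne, Matrix.diagonal_apply_ne _ hne,
        hdiag2 i j hne, add_zero]
  have hMblk : M = fromBlocks (Matrix.diagonal (fun i : Fin m1 => d (Sum.inl i))) Bᵀ
      B (Matrix.diagonal (fun j : Fin m2 => d (Sum.inr j))) := by
    rw [hMblk0, hD1, hD2]
  have hddiag : Matrix.diagonal d = fromBlocks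
      (Matrix.diagonal fun i : Fin m1 => d (Sum.inl i)) 0 0
      (Matrix.diagonal fun j : Fin m2 => d (Sum.inr j)) := by
    rw [Matrix.fromBlocks_diagonal]
    congr 1
    funext i
    cases i <;> rfl
  have hLD : L + Matrix.diagonal d = fromBlocks
      (Matrix.diagonal fun i : Fin m1 => d (Sum.inl i)) 0 B
      (Matrix.diagonal fun j : Fin m2 => d (Sum.inr j)) := by
    rw [hL, hddiag, Matrix.fromBlocks_add]
    simp
  -- diagonal cancellation facts
  have hc1 : (Matrix.diagonal fun i : Fin m1 => d (Sum.inl i))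
      * (Matrix.diagonal fun i : Fin m1 => (d (Sum.inl i))⁻¹) = 1 := by
    have h : (fun i : Fin m1 => d (Sum.inl i) * (d (Sum.inl i))⁻¹) = fun _ => (1:ℝ) :=
      funext fun i => mul_inv_cancel₀ (hdne _)
    rw [Matrix.diagonal_mul_diagonal, h, Matrix.diagonal_one]
  have hc2 : (Matrix.diagonal fun j : Fin m2 => d (Sum.inr j))
      * (Matrix.diagonal fun j : Fin m2 => (d (Sum.inr j))⁻¹) = 1 := by
    have h : (fun j : Fin m2 => d (Sum.inr j) * (d (Sum.inr j))⁻¹) = fun _ => (1:ℝ) :=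
      funext fun j => mul_inv_cancel₀ (hdne _)
    rw [Matrix.diagonal_mul_diagonal, h, Matrix.diagonal_one]
  -- explicit inverse of L + D
  have hNinv : (L + Matrix.diagonal d)⁻¹ = fromBlocks
      (Matrix.diagonal fun i : Fin m1 => (d (Sum.inl i))⁻¹) 0
      (-((Matrix.diagonal fun j : Fin m2 => (d (Sum.inr j))⁻¹) * B
        * (Matrix.diagonal fun i : Fin m1 => (d (Sum.inl i))⁻¹)))
      (Matrix.diagonal fun j : Fin m2 => (d (Sum.inr j))⁻¹) := by
    apply Matrix.inv_eq_right_inv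
    rw [hLD, Matrix.fromBlocks_multiply, ← Matrix.fromBlocks_one]
    rw [Matrix.fromBlocks_inj]
    refine ⟨by simp [hc1], by simp, ?_, by simp [hc2]⟩
    rw [Matrix.mul_neg, ← Matrix.mul_assoc, ← Matrix.mul_assoc, hc2, Matrix.one_mul]
    exact add_neg_cancel _
  -- sqrt diagonal facts
  have hS1 : (Matrix.diagonal fun i : Fin m1 => Real.sqrt (d (Sum.inl i)))
      * (Matrix.diagonal fun i : Fin m1 => (d (Sum.inl i))⁻¹)
      * (Matrix.diagonal fun i : Fin m1 => Real.sqrt (d (Sum.inl i))) = 1 := by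
    have h : (fun i : Fin m1 => Real.sqrt (d (Sum.inl i)) * (d (Sum.inl i))⁻¹
        * Real.sqrt (d (Sum.inl i))) = fun _ => (1:ℝ) := by
      funext i
      rw [mul_comm, ← mul_assoc, ← hsqrt (Sum.inl i)]
      field_simp
      rw [Real.sqrt_sq (Real.sqrt_nonneg _)]
      exact div_self (pow_ne_zero 2 (hsqne _))
    rw [Matrix.diagonal_mul_diagonal, Matrix.diagonal_mul_diagonal, h, Matrix.diagonal_one]
  have hR2 : (Matrix.diagonal fun j : Fin m2 => Real.sqrt (d (Sum.inr j)))
      * (Matrix.diagonal fun j : Fin m2 => (d (Sum.inr j))⁻¹)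
      = Matrix.diagonal fun j : Fin m2 => (Real.sqrt (d (Sum.inr j)))⁻¹ := by
    have h : (fun j : Fin m2 => Real.sqrt (d (Sum.inr j)) * (d (Sum.inr j))⁻¹)
        = fun j => (Real.sqrt (d (Sum.inr j)))⁻¹ := by
      funext j
      rw [← hsqrt (Sum.inr j)]
      field_simp
      have := hsqne (Sum.inr j)
      rw [Real.sqrt_sq (Real.sqrt_nonneg _), pow_two, ← div_div, div_self this]
    rw [Matrix.diagonal_mul_diagonal, h]
  have hR2' : (Matrix.diagonal fun j : Fin m2 => (d (Sum.inr j))⁻¹)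
      * (Matrix.diagonal fun j : Fin m2 => Real.sqrt (d (Sum.inr j)))
      = Matrix.diagonal fun j : Fin m2 => (Real.sqrt (d (Sum.inr j)))⁻¹ := by
    have h : (fun j : Fin m2 => (d (Sum.inr j))⁻¹ * Real.sqrt (d (Sum.inr j)))
        = fun j => (Real.sqrt (d (Sum.inr j)))⁻¹ := by
      funext j
      rw [← hsqrt (Sum.inr j)]
      field_simp
      have := hsqne (Sum.inr j)
      rw [Real.sqrt_sq (Real.sqrt_nonneg _), pow_two, ← div_div, div_self this]
    rw [Matrix.diagonal_mul_diagonal, h]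
  have hS2 : (Matrix.diagonal fun j : Fin m2 => Real.sqrt (d (Sum.inr j)))
      * (Matrix.diagonal fun j : Fin m2 => (d (Sum.inr j))⁻¹)
      * (Matrix.diagonal fun j : Fin m2 => Real.sqrt (d (Sum.inr j))) = 1 := by
    rw [hR2]
    have h : (fun j : Fin m2 => (Real.sqrt (d (Sum.inr j)))⁻¹ * Real.sqrt (d (Sum.inr j)))
        = fun _ => (1:ℝ) := funext fun j => inv_mul_cancel₀ (hsqne _)
    rw [Matrix.diagonal_mul_diagonal, h, Matrix.diagonal_one]
  have hsqblk : (Matrix.diagonal fun i => Real.sqrt (d i)) = fromBlocks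
      (Matrix.diagonal fun i : Fin m1 => Real.sqrt (d (Sum.inl i))) 0 0
      (Matrix.diagonal fun j : Fin m2 => Real.sqrt (d (Sum.inr j))) := by
    rw [Matrix.fromBlocks_diagonal]
    congr 1
    funext i
    cases i <;> rfl
  rw [← hBt, hNinv, hMblk, hsqblk, Matrix.fromBlocks_transpose, Matrix.transpose_neg,
    Matrix.transpose_zero, Matrix.diagonal_transpose, Matrix.diagonal_transpose,
    ← Matrix.fromBlocks_one]
  simp only [Matrix.fromBlocks_multiply, Matrix.mul_zero, Matrix.zero_mul, Matrix.mul_neg,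
    Matrix.neg_mul, add_zero, zero_add, Matrix.mul_one, Matrix.one_mul, Matrix.transpose_mul,
    Matrix.diagonal_transpose, neg_neg, neg_zero]
  -- reverse cancellations
  have hc1' : (Matrix.diagonal fun i : Fin m1 => (d (Sum.inl i))⁻¹)
      * (Matrix.diagonal fun i : Fin m1 => d (Sum.inl i)) = 1 := by
    have h : (fun i : Fin m1 => (d (Sum.inl i))⁻¹ * d (Sum.inl i)) = fun _ => (1:ℝ) :=
      funext fun i => inv_mul_cancel₀ (hdne _)
    rw [Matrix.diagonal_mul_diagonal, h, Matrix.diagonal_one]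
  have hc2' : (Matrix.diagonal fun j : Fin m2 => (d (Sum.inr j))⁻¹)
      * (Matrix.diagonal fun j : Fin m2 => d (Sum.inr j)) = 1 := by
    have h : (fun j : Fin m2 => (d (Sum.inr j))⁻¹ * d (Sum.inr j)) = fun _ => (1:ℝ) :=
      funext fun j => inv_mul_cancel₀ (hdne _)
    rw [Matrix.diagonal_mul_diagonal, h, Matrix.diagonal_one]
  have hcanc1 : ∀ {p : Type} (X : Matrix (Fin m1) p ℝ),
      (Matrix.diagonal fun i : Fin m1 => d (Sum.inl i))
        * ((Matrix.diagonal fun i : Fin m1 => (d (Sum.inl i))⁻¹) * X) = X := by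
    intro p X; rw [← Matrix.mul_assoc, hc1, Matrix.one_mul]
  have hcanc1' : ∀ {p : Type} (X : Matrix (Fin m1) p ℝ),
      (Matrix.diagonal fun i : Fin m1 => (d (Sum.inl i))⁻¹)
        * ((Matrix.diagonal fun i : Fin m1 => d (Sum.inl i)) * X) = X := by
    intro p X; rw [← Matrix.mul_assoc, hc1', Matrix.one_mul]
  have hcanc2 : ∀ {p : Type} (X : Matrix (Fin m2) p ℝ),
      (Matrix.diagonal fun j : Fin m2 => d (Sum.inr j))
        * ((Matrix.diagonal fun j : Fin m2 => (d (Sum.inr j))⁻¹) * X) = X := by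
    intro p X; rw [← Matrix.mul_assoc, hc2, Matrix.one_mul]
  have hcanc2' : ∀ {p : Type} (X : Matrix (Fin m2) p ℝ),
      (Matrix.diagonal fun j : Fin m2 => (d (Sum.inr j))⁻¹)
        * ((Matrix.diagonal fun j : Fin m2 => d (Sum.inr j)) * X) = X := by
    intro p X; rw [← Matrix.mul_assoc, hc2', Matrix.one_mul]
  have hR2c : ∀ {p : Type} (X : Matrix (Fin m2) p ℝ),
      (Matrix.diagonal fun j : Fin m2 => Real.sqrt (d (Sum.inr j)))
        * ((Matrix.diagonal fun j : Fin m2 => (d (Sum.inr j))⁻¹) * X)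
      = (Matrix.diagonal fun j : Fin m2 => (Real.sqrt (d (Sum.inr j)))⁻¹) * X := by
    intro p X; rw [← Matrix.mul_assoc, hR2]
  have hR2S : (Matrix.diagonal fun j : Fin m2 => (Real.sqrt (d (Sum.inr j)))⁻¹)
      * (Matrix.diagonal fun j : Fin m2 => Real.sqrt (d (Sum.inr j))) = 1 := by
    have h : (fun j : Fin m2 => (Real.sqrt (d (Sum.inr j)))⁻¹ * Real.sqrt (d (Sum.inr j)))
        = fun _ => (1:ℝ) := funext fun j => inv_mul_cancel₀ (hsqne _)
    rw [Matrix.diagonal_mul_diagonal, h, Matrix.diagonal_one]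
  have hD2R : (Matrix.diagonal fun j : Fin m2 => d (Sum.inr j))
      * (Matrix.diagonal fun j : Fin m2 => (Real.sqrt (d (Sum.inr j)))⁻¹)
      = Matrix.diagonal fun j : Fin m2 => Real.sqrt (d (Sum.inr j)) := by
    have h : (fun j : Fin m2 => d (Sum.inr j) * (Real.sqrt (d (Sum.inr j)))⁻¹)
        = fun j => Real.sqrt (d (Sum.inr j)) := by
      funext j
      rw [← hsqrt (Sum.inr j)]
      field_simp
      have := hsqne (Sum.inr j)
      rw [Real.sqrt_sq (Real.sqrt_nonneg _), pow_two, mul_div_assoc, div_self this, mul_one]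
    rw [Matrix.diagonal_mul_diagonal, h]
  have hS1' : (Matrix.diagonal fun i : Fin m1 => Real.sqrt (d (Sum.inl i)))
      * ((Matrix.diagonal fun i : Fin m1 => (d (Sum.inl i))⁻¹)
        * (Matrix.diagonal fun i : Fin m1 => Real.sqrt (d (Sum.inl i)))) = 1 := by
    rw [← Matrix.mul_assoc, hS1]
  rw [sub_eq_add_neg, Matrix.fromBlocks_neg, Matrix.fromBlocks_add, Matrix.fromBlocks_inj]
  refine ⟨?_, ?_, ?_, ?_⟩ <;>
    simp only [Matrix.add_mul, Matrix.neg_mul, Matrix.mul_neg, Matrix.mul_assoc,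
      hcanc1, hcanc1', hcanc2, hcanc2', hR2c, hR2', hR2S, hD2R, hS1',
      neg_add_cancel, add_neg_cancel, add_zero, zero_add, neg_zero, neg_neg,
      Matrix.mul_one, Matrix.one_mul, Matrix.zero_mul, Matrix.mul_zero] <;>
    abel
end

section
/- For K=2, a Gaussian likelihood (W = σ^{-2} I_n), and a balanced design with every random effect realization occurring exactly d times in each grouping (d = n/m1 = n/m2), the smallest eigenvalue of the SSOR-preconditioned matrix equals exactly λ_min = 1 − (1/(σ²/(σ1² d) + 1))·(1/(σ²/(σ2² d) + 1)). -/
open Matrix Finset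


/-- For a binary matrix with unit row sums, distinct columns have disjoint support. -/
lemma stmt6_aux_mul_zero {n m : ℕ} (Z : Matrix (Fin n) (Fin m) ℝ)
    (hbin : ∀ k j, Z k j = 0 ∨ Z k j = 1) (hrow : ∀ k, ∑ j, Z k j = 1)
    {j j' : Fin m} (hjj : j ≠ j') (k : Fin n) : Z k j * Z k j' = 0 := by
  rcases hbin k j with h | h
  · rw [h, zero_mul]
  rcases hbin k j' with h' | h'
  · rw [h', mul_zero]
  exfalso
  have hle : (∑ i ∈ ({j, j'} : Finset (Fin m)), Z k i) ≤ ∑ i, Z k i :=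
    Finset.sum_le_sum_of_subset_of_nonneg (Finset.subset_univ _)
      (fun i _ _ => by rcases hbin k i with h | h <;> simp [h])
  rw [Finset.sum_pair hjj, h, h', hrow] at hle
  linarith

/-- `Zᵀ * diagonal (const c) * Z = (c*d) • 1` for a balanced binary incidence matrix. -/
lemma stmt6_aux_ZtWZ {n m : ℕ} (c dd : ℝ) (Z : Matrix (Fin n) (Fin m) ℝ)
    (hbin : ∀ k j, Z k j = 0 ∨ Z k j = 1) (hrow : ∀ k, ∑ j, Z k j = 1)
    (hcol : ∀ j, ∑ k, Z k j = dd) :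
    Zᵀ * Matrix.diagonal (fun _ : Fin n => c) * Z = (c * dd) • (1 : Matrix (Fin m) (Fin m) ℝ) := by
  ext j j'
  rw [Matrix.mul_apply]
  simp only [Matrix.mul_diagonal, Matrix.transpose_apply]
  by_cases h : j = j'
  · subst h
    have : ∀ k, Z k j * c * Z k j = c * Z k j := by
      intro k; rcases hbin k j with h | h <;> rw [h] <;> ring
    simp only [this]
    rw [← Finset.mul_sum, hcol, Matrix.smul_apply, Matrix.one_apply_eq, smul_eq_mul, mul_one]
  · have : ∀ k, Z k j * c * Z k j' = 0 := by
      intro k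
      have h0 := stmt6_aux_mul_zero Z hbin hrow h k
      calc Z k j * c * Z k j' = c * (Z k j * Z k j') := by ring
        _ = 0 := by rw [h0, mul_zero]
    simp [this, Matrix.one_apply_ne h]

/-- Cauchy–Schwarz / norm bound for nonnegative matrices with bounded row and column sums. -/
lemma stmt6_aux_norm {m1 m2 : ℕ} (A : Matrix (Fin m1) (Fin m2) ℝ) (e : ℝ)
    (hpos : ∀ i j, 0 ≤ A i j) (hrow : ∀ i, ∑ j, A i j = e) (hcol : ∀ j, ∑ i, A i j = e)
    (x : Fin m2 → ℝ) : ∑ i, ((A *ᵥ x) i)^2 ≤ e^2 * ∑ j, (x j)^2 := by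
  have step1 : ∀ i, ((A *ᵥ x) i)^2 ≤ e * ∑ j, A i j * (x j)^2 := by
    intro i
    have := Finset.sum_sq_le_sum_mul_sum_of_sq_eq_mul Finset.univ
      (r := fun j => A i j * x j) (f := fun j => A i j) (g := fun j => A i j * (x j)^2)
      (fun j _ => hpos i j) (fun j _ => mul_nonneg (hpos i j) (sq_nonneg _))
      (fun j _ => by ring)
    rw [hrow] at this
    simpa [Matrix.mulVec, dotProduct] using this
  calc ∑ i, ((A *ᵥ x) i)^2 ≤ ∑ i, e * ∑ j, A i j * (x j)^2 :=
        Finset.sum_le_sum (fun i _ => step1 i)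
    _ = e^2 * ∑ j, (x j)^2 := by
        rw [← Finset.mul_sum, Finset.sum_comm]
        simp_rw [← Finset.sum_mul, hcol]
        rw [← Finset.mul_sum]; ring

/-- For `K = 2`, a Gaussian likelihood (`W = σ⁻² Iₙ`,
`Σ = diag(σ1² I_{m1}, σ2² I_{m2})`), and a balanced design in which every random effect
realization occurs exactly `d` times in each grouping, the smallest eigenvalue of the
SSOR-preconditioned matrix equals exactly
`1 − (1/(σ²/(σ1² d) + 1))·(1/(σ²/(σ2² d) + 1))`. -/
theorem stmt6 {n m1 m2 : ℕ} [NeZero m1] [NeZero m2] (d : ℕ) (hd : 0 < d)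
    (σsq σ1sq σ2sq : ℝ) (hσ : 0 < σsq) (hσ1 : 0 < σ1sq) (hσ2 : 0 < σ2sq)
    (Z1 : Matrix (Fin n) (Fin m1) ℝ) (Z2 : Matrix (Fin n) (Fin m2) ℝ)
    -- binary incidence matrices
    (hZ1bin : ∀ k j, Z1 k j = 0 ∨ Z1 k j = 1)
    (hZ2bin : ∀ k j, Z2 k j = 0 ∨ Z2 k j = 1)
    -- each observation belongs to exactly one level of each grouping
    (hZ1row : ∀ k, ∑ j, Z1 k j = 1) (hZ2row : ∀ k, ∑ j, Z2 k j = 1)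
    -- balanced design: every level occurs exactly `d` times
    (hZ1col : ∀ j, ∑ k, Z1 k j = (d : ℝ)) (hZ2col : ∀ j, ∑ k, Z2 k j = (d : ℝ))
    (w : Fin n → ℝ) (hw : ∀ k, w k = σsq⁻¹)
    (sinv : Fin m1 ⊕ Fin m2 → ℝ)
    (hsinv : sinv = Sum.elim (fun _ => σ1sq⁻¹) (fun _ => σ2sq⁻¹))
    (M : Matrix (Fin m1 ⊕ Fin m2) (Fin m1 ⊕ Fin m2) ℝ)
    (hM : M = Matrix.diagonal sinv
        + (fromCols Z1 Z2)ᵀ * Matrix.diagonal w * fromCols Z1 Z2)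
    (dg : Fin m1 ⊕ Fin m2 → ℝ) (hdg : ∀ i, dg i = M i i)
    (L : Matrix (Fin m1 ⊕ Fin m2) (Fin m1 ⊕ Fin m2) ℝ)
    (hL : L = fromBlocks 0 0 (Z2ᵀ * Matrix.diagonal w * Z1) 0)
    (Mp : Matrix (Fin m1 ⊕ Fin m2) (Fin m1 ⊕ Fin m2) ℝ)
    (hMp : Mp = Matrix.diagonal (fun i => Real.sqrt (dg i)) * (L + Matrix.diagonal dg)⁻¹
        * M * ((L + Matrix.diagonal dg)⁻¹)ᵀ * Matrix.diagonal (fun i => Real.sqrt (dg i)))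
    (hHerm : Mp.IsHermitian) :
    Finset.univ.inf' Finset.univ_nonempty hHerm.eigenvalues
      = 1 - (1 / (σsq / (σ1sq * d) + 1)) * (1 / (σsq / (σ2sq * d) + 1)) := by
  have hd' : (0:ℝ) < (d:ℝ) := by exact_mod_cast hd
  -- basic scalars
  set e : ℝ := σsq⁻¹ * d with he
  set c1 : ℝ := σ1sq⁻¹ + e with hc1def
  set c2 : ℝ := σ2sq⁻¹ + e with hc2def
  have he0 : 0 < e := by positivity
  have hc1 : 0 < c1 := by positivity
  have hc2 : 0 < c2 := by positivity
  set A : Matrix (Fin m1) (Fin m2) ℝ := Z1ᵀ * Matrix.diagonal w * Z2 with hA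
  set γ : ℝ := c1⁻¹ * c2⁻¹ with hγ
  have hγ0 : 0 < γ := by positivity
  set t : ℝ := 1 - γ * e^2 with ht
  -- rewrite diagonal w
  have hwdiag : Matrix.diagonal w = Matrix.diagonal (fun _ : Fin n => σsq⁻¹) := by
    have : w = fun _ => σsq⁻¹ := funext hw
    rw [this]
  have hZ1W : Z1ᵀ * Matrix.diagonal w * Z1 = e • (1 : Matrix (Fin m1) (Fin m1) ℝ) := by
    rw [hwdiag, stmt6_aux_ZtWZ σsq⁻¹ (d:ℝ) Z1 hZ1bin hZ1row hZ1col]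
  have hZ2W : Z2ᵀ * Matrix.diagonal w * Z2 = e • (1 : Matrix (Fin m2) (Fin m2) ℝ) := by
    rw [hwdiag, stmt6_aux_ZtWZ σsq⁻¹ (d:ℝ) Z2 hZ2bin hZ2row hZ2col]
  have hAt : Aᵀ = Z2ᵀ * Matrix.diagonal w * Z1 := by
    rw [hA, Matrix.transpose_mul, Matrix.transpose_mul, Matrix.transpose_transpose,
      Matrix.diagonal_transpose, Matrix.mul_assoc]
  -- block form of M
  have hMb : M = fromBlocks (c1 • 1) A Aᵀ (c2 • 1) := by
    rw [hM, transpose_fromCols, Matrix.mul_assoc, mul_fromCols, fromRows_mul_fromCols,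
      hsinv, ← fromBlocks_diagonal, fromBlocks_add]
    rw [← Matrix.mul_assoc, ← Matrix.mul_assoc, ← Matrix.mul_assoc, ← Matrix.mul_assoc]
    rw [hZ1W, hZ2W, ← hAt, ← hA]
    rw [← Matrix.smul_one_eq_diagonal, ← Matrix.smul_one_eq_diagonal, ← add_smul, ← add_smul,
      zero_add, zero_add, ← hc1def, ← hc2def]
  -- dg is constant on blocks
  have hdg' : dg = Sum.elim (fun _ => c1) (fun _ => c2) := by
    funext i
    rw [hdg, hMb]
    cases i with
    | inl j => simp [fromBlocks, Matrix.smul_apply, Matrix.one_apply_eq]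
    | inr j => simp [fromBlocks, Matrix.smul_apply, Matrix.one_apply_eq]
  -- diagonal dg as blocks
  have hdgb : Matrix.diagonal dg = fromBlocks (c1 • 1) 0 0 (c2 • 1) := by
    rw [hdg', ← fromBlocks_diagonal, ← Matrix.smul_one_eq_diagonal, ← Matrix.smul_one_eq_diagonal]
  -- sqrt diagonal as blocks
  have hsqb : (Matrix.diagonal fun i => Real.sqrt (dg i))
      = fromBlocks (Real.sqrt c1 • 1) 0 0 (Real.sqrt c2 • 1) := by
    rw [hdg']
    have : (fun i => Real.sqrt (Sum.elim (fun _ => c1) (fun _ => c2) i))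
        = Sum.elim (fun _ : Fin m1 => Real.sqrt c1) (fun _ : Fin m2 => Real.sqrt c2) := by
      funext i; cases i <;> rfl
    rw [this, ← fromBlocks_diagonal, ← Matrix.smul_one_eq_diagonal, ← Matrix.smul_one_eq_diagonal]
  -- the lower-triangular factor and its inverse
  have hLD : L + Matrix.diagonal dg = fromBlocks (c1 • 1) 0 Aᵀ (c2 • 1) := by
    rw [hL, hdgb, fromBlocks_add, hAt]
    simp only [zero_add, add_zero]
  set N : Matrix (Fin m1 ⊕ Fin m2) (Fin m1 ⊕ Fin m2) ℝ :=
    fromBlocks (c1⁻¹ • 1) 0 ((-(c1⁻¹ * c2⁻¹)) • Aᵀ) (c2⁻¹ • 1) with hN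
  have hTN : (L + Matrix.diagonal dg) * N = 1 := by
    have hs2 : c1⁻¹ * c2⁻¹ * c2 = c1⁻¹ := by
      rw [mul_assoc, inv_mul_cancel₀ hc2.ne', mul_one]
    have hs4 : c2 * (c1⁻¹ * c2⁻¹) = c1⁻¹ := by
      rw [mul_comm c1⁻¹, ← mul_assoc, mul_inv_cancel₀ hc2.ne', one_mul]
    rw [hLD, hN, fromBlocks_multiply]
    simp [Matrix.smul_mul, Matrix.mul_smul, smul_smul, inv_mul_cancel₀ hc1.ne',
      inv_mul_cancel₀ hc2.ne', mul_inv_cancel₀ hc1.ne', mul_inv_cancel₀ hc2.ne',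
      hs2, hs4, ← fromBlocks_one]
  have hNinv : (L + Matrix.diagonal dg)⁻¹ = N := Matrix.inv_eq_right_inv hTN
  have hNt : Nᵀ = fromBlocks (c1⁻¹ • 1) ((-(c1⁻¹ * c2⁻¹)) • A) 0 (c2⁻¹ • 1) := by
    rw [hN, fromBlocks_transpose]
    simp
  have hs5 : c1 * (c1⁻¹ * c2⁻¹) = c2⁻¹ := by
    rw [← mul_assoc, mul_inv_cancel₀ hc1.ne', one_mul]
  have h1 : N * M = fromBlocks 1 (c1⁻¹ • A) 0 (1 - γ • (Aᵀ * A)) := by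
    rw [hN, hMb, fromBlocks_multiply]
    simp [hs5, neg_add_cancel, sub_eq_neg_add, Matrix.smul_mul, Matrix.mul_smul, smul_smul, inv_mul_cancel₀ hc1.ne',
      inv_mul_cancel₀ hc2.ne', mul_inv_cancel₀ hc1.ne', mul_inv_cancel₀ hc2.ne', hγ]
  have h2 : N * M * Nᵀ = fromBlocks (c1⁻¹ • 1) 0 0 (c2⁻¹ • (1 - γ • (Aᵀ * A))) := by
    have hs6 : c2⁻¹ * c1⁻¹ = c1⁻¹ * c2⁻¹ := mul_comm _ _
    rw [h1, hNt, fromBlocks_multiply]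
    simp [Matrix.smul_mul, Matrix.mul_smul, smul_smul, hγ, hs6]
  have hMpb : Mp = fromBlocks 1 0 0 (1 - γ • (Aᵀ * A)) := by
    rw [hMp, hNinv,
      Matrix.mul_assoc (Matrix.diagonal fun i => Real.sqrt (dg i)) N M,
      Matrix.mul_assoc (Matrix.diagonal fun i => Real.sqrt (dg i)) (N * M) Nᵀ, h2, hsqb,
      fromBlocks_multiply, fromBlocks_multiply]
    have hq1 : Real.sqrt c1 * (c1⁻¹ * Real.sqrt c1) = 1 := by
      rw [mul_comm c1⁻¹, ← mul_assoc, Real.mul_self_sqrt hc1.le, mul_inv_cancel₀ hc1.ne']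
    have hq2 : Real.sqrt c2 * (c2⁻¹ * Real.sqrt c2) = 1 := by
      rw [mul_comm c2⁻¹, ← mul_assoc, Real.mul_self_sqrt hc2.le, mul_inv_cancel₀ hc2.ne']
    simp [Matrix.smul_mul, Matrix.mul_smul, smul_smul, hq1, hq2]
  -- entrywise description of A
  have hAapp : ∀ i j, A i j = ∑ k, Z1 k i * σsq⁻¹ * Z2 k j := by
    intro i j
    rw [hA, Matrix.mul_apply]
    congr 1; funext k
    rw [Matrix.mul_diagonal, Matrix.transpose_apply, hw]
  have hApos : ∀ i j, 0 ≤ A i j := by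
    intro i j; rw [hAapp]
    refine Finset.sum_nonneg fun k _ => ?_
    have h1 : 0 ≤ Z1 k i := by rcases hZ1bin k i with h | h <;> simp [h]
    have h2 : 0 ≤ Z2 k j := by rcases hZ2bin k j with h | h <;> simp [h]
    have h3 : (0:ℝ) ≤ σsq⁻¹ := by positivity
    exact mul_nonneg (mul_nonneg h1 h3) h2
  have hArow : ∀ i, ∑ j, A i j = e := by
    intro i
    simp_rw [hAapp]
    rw [Finset.sum_comm]
    have h1 : ∀ k, ∑ j, Z1 k i * σsq⁻¹ * Z2 k j = Z1 k i * σsq⁻¹ := by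
      intro k; rw [← Finset.mul_sum, hZ2row, mul_one]
    simp_rw [h1]
    rw [← Finset.sum_mul, hZ1col, he]; ring
  have hAcol : ∀ j, ∑ i, A i j = e := by
    intro j
    simp_rw [hAapp]
    rw [Finset.sum_comm]
    have h1 : ∀ k, ∑ i, Z1 k i * σsq⁻¹ * Z2 k j = σsq⁻¹ * Z2 k j := by
      intro k
      simp_rw [mul_assoc]
      rw [← Finset.sum_mul, hZ1row, one_mul]
    simp_rw [h1]
    rw [← Finset.mul_sum, hZ2col, he]
  -- Rayleigh quotient lower bound
  have hray : ∀ v : (Fin m1 ⊕ Fin m2) → ℝ, t * (v ⬝ᵥ v) ≤ v ⬝ᵥ (Mp *ᵥ v) := by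
    intro v
    set v1 : Fin m1 → ℝ := v ∘ Sum.inl with hv1
    set v2 : Fin m2 → ℝ := v ∘ Sum.inr with hv2
    have hmv : Mp *ᵥ v = Sum.elim v1 (v2 - γ • (Aᵀ *ᵥ (A *ᵥ v2))) := by
      rw [hMpb, fromBlocks_mulVec, Matrix.one_mulVec, Matrix.zero_mulVec, Matrix.zero_mulVec,
        add_zero, zero_add, Matrix.sub_mulVec, Matrix.one_mulVec, Matrix.smul_mulVec,
        ← Matrix.mulVec_mulVec]
    have hdot : v ⬝ᵥ (Mp *ᵥ v) = (∑ i, v1 i * v1 i)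
        + ((∑ j, v2 j * v2 j) - γ * ∑ i, ((A *ᵥ v2) i)^2) := by
      rw [hmv]
      unfold dotProduct
      rw [Fintype.sum_sum_type]
      have hAA : ∑ j, v2 j * (Aᵀ *ᵥ (A *ᵥ v2)) j = ∑ i, ((A *ᵥ v2) i)^2 := by
        have := dotProduct_mulVec v2 Aᵀ (A *ᵥ v2)
        unfold dotProduct at this
        rw [this, Matrix.vecMul_transpose]
        congr 1; funext i; ring
      have hv1' : ∀ i, v (Sum.inl i) = v1 i := fun _ => rfl
      have hv2' : ∀ j, v (Sum.inr j) = v2 j := fun _ => rfl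
      have h2 : ∀ j, v2 j * (γ * (Aᵀ *ᵥ (A *ᵥ v2)) j)
          = γ * (v2 j * (Aᵀ *ᵥ (A *ᵥ v2)) j) := fun j => by ring
      simp only [Sum.elim_inl, Sum.elim_inr, Pi.sub_apply, Pi.smul_apply, smul_eq_mul, mul_sub,
        hv1', hv2']
      rw [Finset.sum_sub_distrib]
      congr 2
      simp_rw [h2]
      rw [← Finset.mul_sum, hAA]
    have hvv : v ⬝ᵥ v = (∑ i, v1 i * v1 i) + (∑ j, v2 j * v2 j) := by
      unfold dotProduct
      rw [Fintype.sum_sum_type]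
      rfl
    have hQ : ∑ i, ((A *ᵥ v2) i)^2 ≤ e^2 * ∑ j, (v2 j)^2 :=
      stmt6_aux_norm A e hApos hArow hAcol v2
    have hS2 : ∑ j, (v2 j)^2 = ∑ j, v2 j * v2 j := by simp_rw [pow_two]
    rw [hS2] at hQ
    have hS1 : 0 ≤ ∑ i, v1 i * v1 i := Finset.sum_nonneg fun i _ => mul_self_nonneg _
    have hS2n : 0 ≤ ∑ j, v2 j * v2 j := Finset.sum_nonneg fun j _ => mul_self_nonneg _
    rw [hdot, hvv, ht]
    nlinarith [mul_le_mul_of_nonneg_left hQ hγ0.le,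
      mul_nonneg (mul_nonneg hγ0.le (sq_nonneg e)) hS1]
  -- every eigenvalue is at least t
  have hmin : ∀ i, t ≤ hHerm.eigenvalues i := by
    intro i
    have hv := hHerm.mulVec_eigenvectorBasis i
    set v : (Fin m1 ⊕ Fin m2) → ℝ := ⇑(hHerm.eigenvectorBasis i) with hvdef
    have hkey := hray v
    rw [hv, dotProduct_smul, smul_eq_mul] at hkey
    have hvv1 : v ⬝ᵥ v = 1 := by
      have hnorm : ‖hHerm.eigenvectorBasis i‖ = 1 := hHerm.eigenvectorBasis.orthonormal.1 i
      have h2 : ‖hHerm.eigenvectorBasis i‖ ^ 2 = v ⬝ᵥ v := by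
        rw [EuclideanSpace.norm_eq, Real.sq_sqrt (Finset.sum_nonneg fun x _ => sq_nonneg _)]
        unfold dotProduct
        congr 1
        funext x
        rw [Real.norm_eq_abs, sq_abs, pow_two]
      rw [← h2, hnorm, one_pow]
    rw [hvv1, mul_one, mul_one] at hkey
    exact hkey
  -- t is attained: the vector (0, 1) is an eigenvector
  set u : (Fin m1 ⊕ Fin m2) → ℝ := Sum.elim (fun _ => 0) (fun _ => 1) with hu
  have hAv1 : A *ᵥ (fun _ => (1:ℝ)) = fun _ => e := by
    funext i
    simp only [Matrix.mulVec, dotProduct, mul_one]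
    exact hArow i
  have hAtv : Aᵀ *ᵥ (fun _ => e) = fun _ => e^2 := by
    funext j
    simp only [Matrix.mulVec, dotProduct, Matrix.transpose_apply]
    have : ∀ i, A i j * e = A i j * e := fun _ => rfl
    rw [← Finset.sum_mul, hAcol]
    ring
  have hMu : Mp *ᵥ u = t • u := by
    have h0 : (Sum.elim (fun _ : Fin m1 => (0:ℝ)) (fun _ : Fin m2 => (1:ℝ))) ∘ Sum.inl
        = (0 : Fin m1 → ℝ) := rfl
    have h1 : (Sum.elim (fun _ : Fin m1 => (0:ℝ)) (fun _ : Fin m2 => (1:ℝ))) ∘ Sum.inr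
        = fun _ => 1 := rfl
    rw [hMpb, hu, fromBlocks_mulVec, h0, h1]
    simp only [Matrix.mulVec_zero, Matrix.zero_mulVec, add_zero, zero_add]
    rw [Matrix.sub_mulVec, Matrix.one_mulVec, Matrix.smul_mulVec,
      ← Matrix.mulVec_mulVec, hAv1, hAtv]
    funext x
    cases x with
    | inl j => simp
    | inr j =>
      simp only [Sum.elim_inr, Pi.smul_apply, Pi.sub_apply, smul_eq_mul, ht]
      ring
  have hune : u ≠ 0 := by
    intro h
    have hm2 : 0 < m2 := Nat.pos_of_ne_zero (NeZero.ne m2)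
    have := congrFun h (Sum.inr ⟨0, hm2⟩)
    simp [hu] at this
  have hspec : t ∈ spectrum ℝ Mp := by
    rw [spectrum.mem_iff]
    intro hunit
    have hdet0 : ((algebraMap ℝ (Matrix (Fin m1 ⊕ Fin m2) (Fin m1 ⊕ Fin m2) ℝ)) t - Mp).det
        = 0 := by
      refine (Matrix.exists_mulVec_eq_zero_iff).mp ⟨u, hune, ?_⟩
      rw [Matrix.sub_mulVec, hMu, Algebra.algebraMap_eq_smul_one, Matrix.smul_mulVec,
        Matrix.one_mulVec, sub_self]
    have := (Matrix.isUnit_iff_isUnit_det _).mp hunit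
    rw [hdet0] at this
    exact (not_isUnit_zero : ¬ IsUnit (0:ℝ)) this
  have hex : ∃ i, hHerm.eigenvalues i = t := by
    rw [Matrix.IsHermitian.spectrum_real_eq_range_eigenvalues hHerm] at hspec
    obtain ⟨i, hi⟩ := hspec
    exact ⟨i, hi⟩
  -- the smallest eigenvalue is t, and t equals the stated value
  have htval : t = 1 - (1 / (σsq / (σ1sq * d) + 1)) * (1 / (σsq / (σ2sq * d) + 1)) := by
    rw [ht, hγ, hc1def, hc2def, he]
    have h1 : σsq / (σ1sq * d) + 1 ≠ 0 := by positivity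
    have h2 : σsq / (σ2sq * d) + 1 ≠ 0 := by positivity
    field_simp
  rw [← htval]
  obtain ⟨i0, hi0⟩ := hex
  refine le_antisymm ?_ ?_
  · exact hi0 ▸ Finset.inf'_le _ (Finset.mem_univ i0)
  · exact Finset.le_inf' _ _ (fun i _ => hmin i)
end

section
/- For the diagonal preconditioner P = D = diag((Σ^{-1}+Z^T W Z)_{ii}) with K grouped random effects, the K−1 smallest eigenvalues λ_{m+1−k}, k = 1,…,K−1, of the preconditioned matrix D^{-1/2}(Σ^{-1}+Z^T W Z)D^{-1/2} satisfy 1/max_i(Σ_{ii} D_{ii}) ≤ λ_{m+1−k} ≤ 1/min_i(Σ_{ii} D_{ii}). -/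
open Matrix Finset

set_option maxHeartbeats 1000000

private lemma repr_zero_of_not_mem {ι : Type*} [Fintype ι]
    (b : OrthonormalBasis ι ℝ (EuclideanSpace ℝ ι)) (S : Set ι)
    {x : EuclideanSpace ℝ ι} (hx : x ∈ Submodule.span ℝ (b '' S))
    {i : ι} (hi : i ∉ S) : (inner ℝ (b i) x : ℝ) = 0 := by
  induction hx using Submodule.span_induction with
  | mem y hy =>
      obtain ⟨j, hj, rfl⟩ := hy
      exact b.orthonormal.2 (fun h => hi (h ▸ hj))
  | zero => simp
  | add y z _ _ hy hz => simp [inner_add_right, hy, hz]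
  | smul a y _ hy => simp [inner_smul_right, hy]

private lemma rayleigh_lower {ι : Type*} [Fintype ι] [DecidableEq ι]
    {A : Matrix ι ι ℝ} (hA : A.IsHermitian) (S : Set ι) (lam : ℝ)
    (hlam : ∀ i ∈ S, lam ≤ hA.eigenvalues i)
    (x : EuclideanSpace ℝ ι) (hx : x ∈ Submodule.span ℝ (hA.eigenvectorBasis '' S)) :
    lam * (inner ℝ x x : ℝ) ≤ (inner ℝ x ((Matrix.toEuclideanLin A) x) : ℝ) := by
  set T := Matrix.toEuclideanLin A with hT'
  have hT : T.IsSymmetric := (Matrix.isHermitian_iff_isSymmetric.1 hA)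
  set b := hA.eigenvectorBasis with hb
  set μ := hA.eigenvalues with hμ
  have hTb : ∀ i, T (b i) = μ i • b i := by
    intro i
    have h := (Matrix.isHermitian_iff_isSymmetric.1 hA).apply_eigenvectorBasis
      finrank_euclideanSpace ((Fintype.equivOfCardEq (Fintype.card_fin _)).symm i)
    simpa [Matrix.IsHermitian.eigenvectorBasis, Matrix.IsHermitian.eigenvalues,
      Matrix.IsHermitian.eigenvalues₀, hb, hμ, hT'] using h
  set c : ι → ℝ := fun i => (inner ℝ (b i) x : ℝ) with hc
  have hxr : ∑ i, c i • b i = x := by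
    simpa [hc, b.repr_apply_apply] using b.sum_repr x
  have hbiTx : ∀ i, (inner ℝ (b i) (T x) : ℝ) = μ i * c i := by
    intro i
    rw [← hT (b i) x, hTb i, inner_smul_left]
    simp [hc, RCLike.conj_to_real]
  have hQ : (inner ℝ x (T x) : ℝ) = ∑ i, μ i * c i ^ 2 := by
    conv_lhs => rw [← hxr]
    rw [sum_inner]
    simp only [hxr, inner_smul_left, RCLike.conj_to_real, hbiTx]
    exact Finset.sum_congr rfl fun i _ => by ring
  have hN : (inner ℝ x x : ℝ) = ∑ i, c i ^ 2 := by
    conv_lhs => rw [← hxr]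
    rw [sum_inner]
    simp only [hxr, inner_smul_left, RCLike.conj_to_real]
    refine Finset.sum_congr rfl fun i _ => ?_
    have : (inner ℝ (b i) x : ℝ) = c i := rfl
    rw [this]; ring
  rw [hQ, hN, Finset.mul_sum]
  apply Finset.sum_le_sum
  intro i _
  by_cases hiS : i ∈ S
  · exact mul_le_mul_of_nonneg_right (hlam i hiS) (sq_nonneg _)
  · have : c i = 0 := repr_zero_of_not_mem b S hx hiS
    simp [this]

private lemma quadZ {n ι : Type*} [Fintype n] [Fintype ι] [DecidableEq n]
    (Z : Matrix n ι ℝ) (w : n → ℝ) (y : ι → ℝ) :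
    y ⬝ᵥ ((Zᵀ * Matrix.diagonal w * Z) *ᵥ y) = ∑ l, w l * ((Z *ᵥ y) l) ^ 2 := by
  rw [← Matrix.mulVec_mulVec, ← Matrix.mulVec_mulVec, Matrix.dotProduct_mulVec,
    Matrix.vecMul_transpose]
  simp only [dotProduct, Matrix.mulVec_diagonal]
  exact Finset.sum_congr rfl fun l _ => by ring

private lemma span_top_eigen_dim {ι : Type*} [Fintype ι] [DecidableEq ι]
    (b : OrthonormalBasis ι ℝ (EuclideanSpace ℝ ι))
    (e : Fin (Fintype.card ι) ≃ ι) (t : Fin (Fintype.card ι)) :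
    Module.finrank ℝ (Submodule.span ℝ (⇑b '' (⇑e '' {u | t ≤ u}))) = Fintype.card ι - t := by
  have hinj : Function.Injective ((fun u : {u : Fin (Fintype.card ι) // t ≤ u} => e u.1)) :=
    fun u₁ u₂ h => Subtype.ext (e.injective h)
  have hfo : Orthonormal ℝ (⇑b ∘ (fun u : {u : Fin (Fintype.card ι) // t ≤ u} => e u.1)) :=
    b.orthonormal.comp _ hinj
  have hrange : Set.range (⇑b ∘ (fun u : {u : Fin (Fintype.card ι) // t ≤ u} => e u.1))
      = ⇑b '' (⇑e '' {u | t ≤ u}) := by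
    ext z
    constructor
    · rintro ⟨u, rfl⟩; exact ⟨e u.1, ⟨u.1, u.2, rfl⟩, rfl⟩
    · rintro ⟨i, ⟨u, hu, rfl⟩, rfl⟩; exact ⟨⟨u, hu⟩, rfl⟩
  rw [← hrange, finrank_span_eq_card hfo.linearIndependent]
  rw [Fintype.card_subtype]
  rw [show Finset.univ.filter (fun u : Fin (Fintype.card ι) => t ≤ u)
      = Finset.Ici t from by ext u; simp]
  exact Fin.card_Ici t
/-- For the diagonal preconditioner `P = D = diag((Σ⁻¹+ZᵀWZ)_{ii})`
with `K` grouped random effects, the `K−1` smallest eigenvalues of the preconditioned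
matrix `D^{-1/2}(Σ⁻¹+ZᵀWZ)D^{-1/2}` lie in `[1/max_i(Σ_{ii}D_{ii}), 1/min_i(Σ_{ii}D_{ii})]`:
in any increasing enumeration of the eigenvalues (with multiplicity), the first `K−1`
satisfy these bounds. -/
theorem stmt7 {n K : ℕ} {m : Fin K → ℕ}
    (hne : (Finset.univ : Finset ((k : Fin K) × Fin (m k))).Nonempty)
    (w : Fin n → ℝ) (hw : ∀ l, 0 < w l)
    (s : (k : Fin K) × Fin (m k) → ℝ) (hs : ∀ i, 0 < s i)
    (Z : Matrix (Fin n) ((k : Fin K) × Fin (m k)) ℝ)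
    (hZbin : ∀ l i, Z l i = 0 ∨ Z l i = 1)
    (hZrow : ∀ l (k : Fin K), ∑ j : Fin (m k), Z l ⟨k, j⟩ = 1)
    (M : Matrix ((k : Fin K) × Fin (m k)) ((k : Fin K) × Fin (m k)) ℝ)
    (hM : M = Matrix.diagonal (fun i => (s i)⁻¹) + Zᵀ * Matrix.diagonal w * Z)
    (Mp : Matrix ((k : Fin K) × Fin (m k)) ((k : Fin K) × Fin (m k)) ℝ)
    (hMp : Mp = Matrix.diagonal (fun i => (Real.sqrt (M i i))⁻¹) * M
        * Matrix.diagonal (fun i => (Real.sqrt (M i i))⁻¹))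
    (hHerm : Mp.IsHermitian) :
    ∀ e : Fin (Fintype.card ((k : Fin K) × Fin (m k))) ≃ ((k : Fin K) × Fin (m k)),
      Monotone (fun t => hHerm.eigenvalues (e t)) →
      ∀ t : Fin (Fintype.card ((k : Fin K) × Fin (m k))), (t : ℕ) < K - 1 →
        (Finset.univ.sup' hne fun i => s i * M i i)⁻¹ ≤ hHerm.eigenvalues (e t)
        ∧ hHerm.eigenvalues (e t) ≤ (Finset.univ.inf' hne fun i => s i * M i i)⁻¹ := by
  classical
  intro e hmono t ht
  set d : ((k : Fin K) × Fin (m k)) → ℝ := fun i => (Real.sqrt (M i i))⁻¹ with hd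
  -- diagonal entries of M are positive
  have hC : ∀ i j, (Zᵀ * Matrix.diagonal w * Z) i j = ∑ l, Z l i * w l * Z l j := by
    intro i j
    rw [Matrix.mul_apply]
    refine Finset.sum_congr rfl fun l _ => ?_
    rw [Matrix.mul_diagonal, Matrix.transpose_apply]
  have hMd : ∀ i, 0 < M i i := by
    intro i
    have h1 : 0 ≤ ∑ l, Z l i * w l * Z l i := by
      refine Finset.sum_nonneg fun l _ => ?_
      have h2 : Z l i * w l * Z l i = w l * (Z l i * Z l i) := by ring
      rw [h2]; exact mul_nonneg (hw l).le (mul_self_nonneg _)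
    have h3 : M i i = (s i)⁻¹ + ∑ l, Z l i * w l * Z l i := by
      rw [hM]; rw [Matrix.add_apply, Matrix.diagonal_apply_eq, hC]
    rw [h3]
    have : 0 < (s i)⁻¹ := inv_pos.mpr (hs i)
    linarith
  have hsq : ∀ i, Real.sqrt (M i i) * Real.sqrt (M i i) = M i i :=
    fun i => Real.mul_self_sqrt (hMd i).le
  have hsqpos : ∀ i, 0 < Real.sqrt (M i i) := fun i => Real.sqrt_pos.mpr (hMd i)
  set Z' := Z * Matrix.diagonal d with hZ'
  set A' := Matrix.diagonal (fun i => (s i * M i i)⁻¹) with hA'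
  set B := Z'ᵀ * Matrix.diagonal w * Z' with hB
  have hsplit : Mp = A' + B := by
    rw [hMp, hM, Matrix.mul_add, Matrix.add_mul, hA', hB, hZ']
    congr 1
    · rw [show Matrix.diagonal d * Matrix.diagonal (fun i => (s i)⁻¹) * Matrix.diagonal d
          = Matrix.diagonal (fun i => d i * (s i)⁻¹ * d i) by
        rw [Matrix.diagonal_mul_diagonal, Matrix.diagonal_mul_diagonal]]
      have hfun : (fun i => d i * (s i)⁻¹ * d i)
          = fun i : (k : Fin K) × Fin (m k) => (s i * M i i)⁻¹ := by
        funext i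
        have h2 : d i * (s i)⁻¹ * d i
            = (Real.sqrt (M i i) * s i * Real.sqrt (M i i))⁻¹ := by
          rw [hd]; rw [mul_inv, mul_inv]; try ring
        rw [h2, show Real.sqrt (M i i) * s i * Real.sqrt (M i i)
            = s i * (Real.sqrt (M i i) * Real.sqrt (M i i)) by ring, hsq i]
      rw [hfun]
    · rw [Matrix.transpose_mul, Matrix.diagonal_transpose]
      simp only [Matrix.mul_assoc]
  have hBq : ∀ y : ((k : Fin K) × Fin (m k)) → ℝ, 0 ≤ y ⬝ᵥ (B *ᵥ y) := by
    intro y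
    rw [hB, quadZ]
    exact Finset.sum_nonneg fun l _ => mul_nonneg (hw l).le (sq_nonneg _)
  set η : ((k : Fin K) × Fin (m k)) → ℝ := fun i => s i * M i i with hη
  have hηpos : ∀ i, 0 < η i := fun i => mul_pos (hs i) (hMd i)
  have hcmax : ∀ i, (η i)⁻¹ ≤ (Finset.univ.inf' hne η)⁻¹ := by
    intro i
    obtain ⟨i0, _, hi0⟩ := Finset.exists_mem_eq_inf' hne η
    exact inv_anti₀ (by rw [hi0]; exact hηpos i0)
      (Finset.inf'_le _ (Finset.mem_univ i))
  have hcmin : ∀ i, (Finset.univ.sup' hne η)⁻¹ ≤ (η i)⁻¹ :=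
    fun i => inv_anti₀ (hηpos i) (Finset.le_sup' _ (Finset.mem_univ i))
  have hAq : ∀ y : ((k : Fin K) × Fin (m k)) → ℝ,
      y ⬝ᵥ (A' *ᵥ y) = ∑ i, (η i)⁻¹ * (y i * y i) := by
    intro y
    rw [hA']
    simp only [dotProduct, Matrix.mulVec_diagonal]
    exact Finset.sum_congr rfl fun i _ => by rw [hη]; ring
  set b := hHerm.eigenvectorBasis with hbdef
  set μ := hHerm.eigenvalues with hμdef
  -- lower bound (valid for every eigenvalue)
  have hlow : ∀ i, (Finset.univ.sup' hne η)⁻¹ ≤ μ i := by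
    intro i
    have he : μ i = (WithLp.equiv 2 _ (b i)) ⬝ᵥ (Mp *ᵥ (WithLp.equiv 2 _ (b i))) := by
      have h := hHerm.eigenvalues_eq i
      simpa using h
    set y : ((k : Fin K) × Fin (m k)) → ℝ := WithLp.equiv 2 _ (b i) with hy
    have hnorm : ∑ j, y j * y j = 1 := by
      have h1 : (inner ℝ (b i) (b i) : ℝ) = 1 := by
        rw [real_inner_self_eq_norm_mul_norm, b.orthonormal.1 i]; norm_num
      rw [← h1, PiLp.inner_apply]
      simp [RCLike.conj_to_real, hy, sq]
    have h2 : (Finset.univ.sup' hne η)⁻¹ * 1 ≤ y ⬝ᵥ (A' *ᵥ y) := by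
      rw [← hnorm, Finset.mul_sum, hAq]
      exact Finset.sum_le_sum fun j _ =>
        mul_le_mul_of_nonneg_right (hcmin j) (mul_self_nonneg _)
    have h3 := hBq y
    rw [he, hsplit, Matrix.add_mulVec, dotProduct_add]
    rw [mul_one] at h2
    exact le_add_of_le_of_nonneg h2 h3
  refine ⟨hlow (e t), ?_⟩
  -- upper bound
  have hlam : ∀ i ∈ e '' {u | t ≤ u}, μ (e t) ≤ μ i := by
    rintro i ⟨u, hu, rfl⟩
    exact hmono hu
  have hWdim : Module.finrank ℝ (Submodule.span ℝ (⇑b '' (⇑e '' {u | t ≤ u})))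
      = Fintype.card ((k : Fin K) × Fin (m k)) - t := span_top_eigen_dim b e t
  obtain ⟨x, hx0, hxW, hBx⟩ :
      ∃ x : EuclideanSpace ℝ ((k : Fin K) × Fin (m k)), x ≠ 0 ∧
        x ∈ Submodule.span ℝ (b '' (e '' {u | t ≤ u})) ∧
        B *ᵥ (WithLp.equiv 2 _ x) = 0 := by
    rcases Nat.eq_zero_or_pos n with h0 | hpos
    · subst h0
      refine ⟨b (e t), ?_, Submodule.subset_span ⟨e t, ⟨t, le_refl t, rfl⟩, rfl⟩, ?_⟩
      · intro h
        have h1 := b.orthonormal.1 (e t)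
        rw [h] at h1
        simp at h1
      · funext i
        rw [hB]
        simp [Matrix.mulVec, dotProduct, Matrix.mul_apply]
    · -- positive case: build the (K-1)-dimensional null space
      have hmk : ∀ k, 0 < m k := by
        intro k
        rcases Nat.eq_zero_or_pos (m k) with hmz | h
        · exfalso
          have h1 := hZrow ⟨0, hpos⟩ k
          haveI : IsEmpty (Fin (m k)) := by rw [hmz]; infer_instance
          rw [Finset.univ_eq_empty, Finset.sum_empty] at h1
          norm_num at h1
        · exact h
      have hK0 : 0 < K := by omega
      set k0 : Fin K := ⟨0, hK0⟩ with hk0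
      set c : Fin K → ((k : Fin K) × Fin (m k)) → ℝ :=
        fun k i => if i.1 = k then 1 else if i.1 = k0 then -1 else 0 with hcdef
      have hZc : ∀ k : Fin K, k ≠ k0 → Z *ᵥ c k = 0 := by
        intro k hk
        funext l
        show ∑ i, Z l i * c k i = 0
        rw [← Finset.univ_sigma_univ, Finset.sum_sigma]
        have hinner : ∀ k' : Fin K, ∑ j : Fin (m k'), Z l ⟨k', j⟩ * c k ⟨k', j⟩
            = (if k' = k then (1:ℝ) else if k' = k0 then -1 else 0) := by
          intro k'
          have hcconst : ∀ j : Fin (m k'), c k ⟨k', j⟩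
              = (if k' = k then (1:ℝ) else if k' = k0 then -1 else 0) := fun j => rfl
          calc ∑ j : Fin (m k'), Z l ⟨k', j⟩ * c k ⟨k', j⟩
              = (∑ j : Fin (m k'), Z l ⟨k', j⟩)
                * (if k' = k then (1:ℝ) else if k' = k0 then -1 else 0) := by
                rw [Finset.sum_mul]
            _ = _ := by rw [hZrow l k', one_mul]
        rw [Finset.sum_congr rfl fun k' _ => hinner k']
        have hsplit2 : ∀ k' : Fin K, (if k' = k then (1:ℝ) else if k' = k0 then -1 else 0)
            = (if k' = k then (1:ℝ) else 0) + (if k' = k0 then -1 else 0) := by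
          intro k'
          rcases eq_or_ne k' k with h1 | h1
          · subst h1; simp [hk]
          · rw [if_neg h1, if_neg h1]
            rcases eq_or_ne k' k0 with h2 | h2
            · subst h2; simp
            · simp [h2]
        rw [Finset.sum_congr rfl fun k' _ => hsplit2 k', Finset.sum_add_distrib]
        simp
      set v : {k : Fin K // k ≠ k0} → EuclideanSpace ℝ ((k : Fin K) × Fin (m k)) :=
        fun k => (WithLp.equiv 2 _).symm (fun i => Real.sqrt (M i i) * c k.1 i) with hvdef
      have hdiagv : ∀ k : {k : Fin K // k ≠ k0},
          Matrix.diagonal d *ᵥ (WithLp.equiv 2 _ (v k)) = c k.1 := by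
        intro k
        funext i
        rw [Matrix.mulVec_diagonal]
        rw [show (WithLp.equiv 2 _ (v k)) i = Real.sqrt (M i i) * c k.1 i from by
          rw [hvdef]; simp [WithLp.equiv_symm_apply, PiLp.toLp_apply]]
        rw [hd, ← mul_assoc, inv_mul_cancel₀ (hsqpos i).ne', one_mul]
      have hBv : ∀ k, B *ᵥ (WithLp.equiv 2 _ (v k)) = 0 := by
        intro k
        rw [hB, hZ', Matrix.transpose_mul, Matrix.diagonal_transpose]
        simp only [← Matrix.mulVec_mulVec]
        rw [hdiagv k, hZc k.1 k.2, Matrix.mulVec_zero, Matrix.mulVec_zero, Matrix.mulVec_zero]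
      have hlin : LinearIndependent ℝ v := by
        rw [Fintype.linearIndependent_iff]
        intro g hg k
        set i₀ : (k : Fin K) × Fin (m k) := ⟨k.1, ⟨0, hmk k.1⟩⟩ with hi₀
        have h1 : ∑ k', g k' * (Real.sqrt (M i₀ i₀) * c k'.1 i₀) = 0 := by
          have h2 := congrArg (WithLp.linearEquiv 2 ℝ (((k : Fin K) × Fin (m k)) → ℝ)) hg
          rw [map_sum, map_zero] at h2
          have h3 := congrFun h2 i₀
          simpa [hvdef, WithLp.linearEquiv_apply, WithLp.equiv_symm_apply, PiLp.toLp_apply,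
            Finset.sum_apply] using h3
        have hcval : ∀ k' : {k : Fin K // k ≠ k0}, c k'.1 i₀ = if k' = k then 1 else 0 := by
          intro k'
          rw [hcdef, hi₀]
          rcases eq_or_ne k' k with h1' | h1'
          · subst h1'; simp
          · have h3 : (k.1 : Fin K) ≠ k'.1 := fun h => h1' (Subtype.ext h.symm)
            simp [h3, k.2, h1']
        rw [Finset.sum_congr rfl fun k' _ => by rw [hcval k']] at h1
        have h5 : ∑ k' : {k : Fin K // k ≠ k0},
            g k' * (Real.sqrt (M i₀ i₀) * if k' = k then (1:ℝ) else 0)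
            = g k * Real.sqrt (M i₀ i₀) := by
          rw [Finset.sum_eq_single k]
          · simp
          · intro k' _ hk'; simp [hk']
          · intro h; exact absurd (Finset.mem_univ k) h
        rw [h5] at h1
        exact (mul_eq_zero.mp h1).resolve_right (hsqpos i₀).ne'
      have hVdim : Module.finrank ℝ (Submodule.span ℝ (Set.range v)) = K - 1 := by
        rw [finrank_span_eq_card hlin]
        have := Fintype.card_subtype_compl (fun k : Fin K => k = k0)
        simp only [Fintype.card_subtype_eq, Fintype.card_fin] at this
        exact this
      -- dimension count
      have hsum := Submodule.finrank_sup_add_finrank_inf_eq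
        (Submodule.span ℝ (Set.range v)) (Submodule.span ℝ (b '' (e '' {u | t ≤ u})))
      have hle := Submodule.finrank_le
        ((Submodule.span ℝ (Set.range v)) ⊔ (Submodule.span ℝ (b '' (e '' {u | t ≤ u}))))
      rw [finrank_euclideanSpace] at hle
      have htN : (t : ℕ) < Fintype.card ((k : Fin K) × Fin (m k)) := t.isLt
      have hpos' : 0 < Module.finrank ℝ
          ((Submodule.span ℝ (Set.range v)) ⊓ (Submodule.span ℝ (b '' (e '' {u | t ≤ u}))) :
            Submodule ℝ (EuclideanSpace ℝ ((k : Fin K) × Fin (m k)))) := by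
        omega
      obtain ⟨x, hxmem, hx0⟩ := Submodule.exists_mem_ne_zero_of_ne_bot
        (p := (Submodule.span ℝ (Set.range v))
          ⊓ (Submodule.span ℝ (⇑b '' (⇑e '' {u | t ≤ u}))))
        (fun hbot => by rw [hbot] at hpos'; simp at hpos')
      refine ⟨x, hx0, (Submodule.mem_inf.mp hxmem).2, ?_⟩
      -- B kills everything in the span of the v's
      have hker : ∀ z ∈ Submodule.span ℝ (Set.range v), B *ᵥ (WithLp.equiv 2 _ z) = 0 := by
        intro z hz
        induction hz using Submodule.span_induction with
        | mem y hy => obtain ⟨k, rfl⟩ := hy; exact hBv k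
        | zero => simp
        | add y z _ _ hy hz => simp [Matrix.mulVec_add, _root_.map_add] at hy hz ⊢; simp [hy, hz]
        | smul a y _ hy => simp [Matrix.mulVec_smul, _root_.map_smul] at hy ⊢; simp [hy]
      exact hker x (Submodule.mem_inf.mp hxmem).1
  have h1 := rayleigh_lower hHerm (e '' {u | t ≤ u}) (μ (e t)) hlam x hxW
  set y : ((k : Fin K) × Fin (m k)) → ℝ := WithLp.equiv 2 _ x with hy
  have hinner1 : (inner ℝ x ((Matrix.toEuclideanLin Mp) x) : ℝ) = y ⬝ᵥ (Mp *ᵥ y) := by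
    rw [Matrix.toEuclideanLin_apply]
    simp [PiLp.inner_apply, dotProduct, RCLike.conj_to_real, hy]
    exact Finset.sum_congr rfl fun _ _ => mul_comm _ _
  have hxx : (inner ℝ x x : ℝ) = ∑ i, y i * y i := by
    rw [PiLp.inner_apply]
    simp [RCLike.conj_to_real, hy, sq]
  have hnormpos : 0 < (inner ℝ x x : ℝ) := by
    have h0 : (inner ℝ x x : ℝ) ≠ 0 := fun h => hx0 (inner_self_eq_zero.mp h)
    have h1' : 0 ≤ (inner ℝ x x : ℝ) := real_inner_self_nonneg
    exact lt_of_le_of_ne h1' (Ne.symm h0)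
  have hupper : y ⬝ᵥ (Mp *ᵥ y) ≤ (Finset.univ.inf' hne η)⁻¹ * (inner ℝ x x : ℝ) := by
    rw [hsplit, Matrix.add_mulVec, dotProduct_add, hBx, dotProduct_zero,
      add_zero, hAq, hxx, Finset.mul_sum]
    exact Finset.sum_le_sum fun i _ =>
      mul_le_mul_of_nonneg_right (hcmax i) (mul_self_nonneg _)
  have hcomb : μ (e t) * (inner ℝ x x : ℝ)
      ≤ (Finset.univ.inf' hne η)⁻¹ * (inner ℝ x x : ℝ) := by
    calc μ (e t) * (inner ℝ x x : ℝ) ≤ (inner ℝ x ((Matrix.toEuclideanLin Mp) x) : ℝ) := h1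
    _ = y ⬝ᵥ (Mp *ᵥ y) := hinner1
    _ ≤ _ := hupper
  exact le_of_mul_le_mul_right hcomb hnormpos
end

section
/- For K=2, a Gaussian likelihood, and a balanced design with d_k = n/m_k repeated observations per level of grouping k, the largest and smallest eigenvalues of the diagonal-preconditioned matrix are exactly λ_max = 1 + 1/√((σ²/(σ1² d1)+1)(σ²/(σ2² d2)+1)) and λ_min = 1 − 1/√((σ²/(σ1² d1)+1)(σ²/(σ2² d2)+1)). -/
open Matrix Finset


/-- Eigenvalue membership: any eigenvalue of a real Hermitian matrix appears in
`hA.eigenvalues`. -/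
lemma aux_exists_eigenvalue_eq {ι : Type*} [Fintype ι] [DecidableEq ι]
    {A : Matrix ι ι ℝ} (hA : A.IsHermitian) {z : ι → ℝ} (hz : z ≠ 0) {μ : ℝ}
    (h : A *ᵥ z = μ • z) : ∃ i, hA.eigenvalues i = μ := by
  set U : Matrix ι ι ℝ := (hA.eigenvectorUnitary : Matrix ι ι ℝ) with hU
  have hU2 : U * star U = 1 := (Matrix.mem_unitaryGroup_iff).mp hA.eigenvectorUnitary.2
  set wv : ι → ℝ := star U *ᵥ z with hwv
  have hwvne : wv ≠ 0 := by
    intro h0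
    apply hz
    have : U *ᵥ (star U *ᵥ z) = z := by
      rw [mulVec_mulVec, hU2, one_mulVec]
    rw [← this, ← hwv, h0, mulVec_zero]
  have hdiag : star (hA.eigenvectorUnitary : Matrix ι ι ℝ) * A * (hA.eigenvectorUnitary : Matrix ι ι ℝ)
      = Matrix.diagonal (RCLike.ofReal ∘ hA.eigenvalues) := by
    have := hA.conjStarAlgAut_star_eigenvectorUnitary
    rw [Unitary.conjStarAlgAut_apply] at this
    simpa using this
  rw [← hU] at hdiag
  have e1 : U *ᵥ wv = z := by rw [hwv, mulVec_mulVec, hU2, one_mulVec]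
  have hkey : Matrix.diagonal (RCLike.ofReal ∘ hA.eigenvalues) *ᵥ wv = μ • wv := by
    rw [← hdiag]
    have e2 : (star U * A * U) *ᵥ wv = star U *ᵥ (A *ᵥ (U *ᵥ wv)) := by
      simp only [mulVec_mulVec, Matrix.mul_assoc]
    rw [e2, e1, h, mulVec_smul, hwv]
  obtain ⟨i, hi⟩ := Function.ne_iff.mp hwvne
  refine ⟨i, ?_⟩
  have := congrFun hkey i
  rw [mulVec_diagonal] at this
  simp only [Function.comp_apply, RCLike.ofReal_real_eq_id, id_eq, Pi.smul_apply,
    smul_eq_mul] at this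
  exact mul_right_cancel₀ hi this

/-- Rayleigh quotient formula for eigenvalues (real case, unit eigenvector). -/
lemma aux_eigenvalue_eq_dot {ι : Type*} [Fintype ι] [DecidableEq ι]
    {A : Matrix ι ι ℝ} (hA : A.IsHermitian) (i : ι) :
    hA.eigenvalues i = (hA.eigenvectorBasis i : ι → ℝ) ⬝ᵥ (A *ᵥ (hA.eigenvectorBasis i : ι → ℝ)) := by
  have := hA.eigenvalues_eq i
  simpa using this

lemma aux_eigenvector_norm {ι : Type*} [Fintype ι] [DecidableEq ι]
    {A : Matrix ι ι ℝ} (hA : A.IsHermitian) (i : ι) :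
    (hA.eigenvectorBasis i : ι → ℝ) ⬝ᵥ (hA.eigenvectorBasis i : ι → ℝ) = 1 := by
  have h := hA.eigenvectorBasis.orthonormal.1 i
  have h2 : (inner ℝ (hA.eigenvectorBasis i) (hA.eigenvectorBasis i) : ℝ) = 1 := by
    rw [real_inner_self_eq_norm_sq, h]; norm_num
  rw [← h2, PiLp.inner_apply]
  simp [dotProduct, mul_comm, sq]

/-- orthogonality of columns of a 0/1 matrix with unit row sums. -/
lemma aux_col_orth {n m : ℕ} (d : ℕ) (Z : Matrix (Fin n) (Fin m) ℝ)
    (hbin : ∀ k j, Z k j = 0 ∨ Z k j = 1)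
    (hrow : ∀ k, ∑ j, Z k j = 1) (hcol : ∀ j, ∑ k, Z k j = (d : ℝ)) (j j' : Fin m) :
    ∑ k, Z k j * Z k j' = if j = j' then (d : ℝ) else 0 := by
  split_ifs with hjj
  · subst hjj
    rw [← hcol j]
    refine Finset.sum_congr rfl fun k _ => ?_
    rcases hbin k j with h | h <;> rw [h] <;> ring
  · rw [Finset.sum_eq_zero]
    intro k _
    rcases hbin k j with h | h
    · rw [h, zero_mul]
    rcases hbin k j' with h' | h'
    · rw [h', mul_zero]
    exfalso
    have hpair : ({j, j'} : Finset (Fin m)).sum (Z k) ≤ ∑ j, Z k j :=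
      Finset.sum_le_sum_of_subset_of_nonneg (Finset.subset_univ _)
        (fun x _ _ => by rcases hbin k x with h0 | h0 <;> rw [h0] <;> norm_num)
    rw [Finset.sum_pair hjj, h, h', hrow k] at hpair
    linarith

lemma aux_sum_sq {n m : ℕ} (d : ℕ) (Z : Matrix (Fin n) (Fin m) ℝ)
    (hbin : ∀ k j, Z k j = 0 ∨ Z k j = 1)
    (hrow : ∀ k, ∑ j, Z k j = 1) (hcol : ∀ j, ∑ k, Z k j = (d : ℝ)) (x : Fin m → ℝ) :
    ∑ k, (∑ j, Z k j * x j) ^ 2 = (d : ℝ) * ∑ j, (x j) ^ 2 := by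
  have : ∀ k, (∑ j, Z k j * x j) ^ 2 = ∑ j, ∑ j', (Z k j * Z k j') * (x j * x j') := by
    intro k
    rw [sq, Finset.sum_mul_sum]
    exact Finset.sum_congr rfl fun j _ => Finset.sum_congr rfl fun j' _ => by ring
  simp_rw [this]
  rw [Finset.sum_comm]
  have : ∀ j, ∑ k, ∑ j', (Z k j * Z k j') * (x j * x j')
      = ∑ j', (∑ k, Z k j * Z k j') * (x j * x j') := by
    intro j
    rw [Finset.sum_comm]
    exact Finset.sum_congr rfl fun j' _ => by rw [Finset.sum_mul]
  simp_rw [this, aux_col_orth d Z hbin hrow hcol]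
  rw [Finset.mul_sum]
  refine Finset.sum_congr rfl fun j _ => ?_
  rw [Finset.sum_eq_single j]
  · split_ifs with h
    · ring
    · exact absurd rfl h
  · intro b _ hb; simp [(Ne.symm hb)]
  · simp

lemma aux_swap {n m1 m2 : ℕ} (Z1 : Matrix (Fin n) (Fin m1) ℝ) (Z2 : Matrix (Fin n) (Fin m2) ℝ)
    (x : Fin m1 → ℝ) (y : Fin m2 → ℝ) :
    ∑ j, ∑ l, x j * (∑ k, Z1 k j * Z2 k l) * y l
      = ∑ k, (∑ j, Z1 k j * x j) * (∑ l, Z2 k l * y l) := by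
  have h1 : ∀ j l, x j * (∑ k, Z1 k j * Z2 k l) * y l = ∑ k, (Z1 k j * x j) * (Z2 k l * y l) := by
    intro j l
    rw [Finset.mul_sum, Finset.sum_mul]
    exact Finset.sum_congr rfl fun k _ => by ring
  have h2 : ∀ (k : Fin n), (∑ j, Z1 k j * x j) * (∑ l, Z2 k l * y l)
      = ∑ j, ∑ l, (Z1 k j * x j) * (Z2 k l * y l) := fun k => Finset.sum_mul_sum _ _ _ _
  simp_rw [h1, h2]
  trans (∑ j, ∑ k, ∑ l, (Z1 k j * x j) * (Z2 k l * y l))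
  · exact Finset.sum_congr rfl fun j _ => Finset.sum_comm
  · exact Finset.sum_comm


/-- For `K = 2`, a Gaussian likelihood, and a balanced design with
`d_k` repeated observations per level of grouping `k`, the largest and smallest
eigenvalues of the diagonal-preconditioned matrix are exactly
`λ_max = 1 + 1/√((σ²/(σ1²d1)+1)(σ²/(σ2²d2)+1))` and
`λ_min = 1 − 1/√((σ²/(σ1²d1)+1)(σ²/(σ2²d2)+1))`. -/

theorem stmt9 {n m1 m2 : ℕ} [NeZero m1] [NeZero m2] (d1 d2 : ℕ) (hd1 : 0 < d1) (hd2 : 0 < d2)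
    (σsq σ1sq σ2sq : ℝ) (hσ : 0 < σsq) (hσ1 : 0 < σ1sq) (hσ2 : 0 < σ2sq)
    (Z1 : Matrix (Fin n) (Fin m1) ℝ) (Z2 : Matrix (Fin n) (Fin m2) ℝ)
    (hZ1bin : ∀ k j, Z1 k j = 0 ∨ Z1 k j = 1)
    (hZ2bin : ∀ k j, Z2 k j = 0 ∨ Z2 k j = 1)
    (hZ1row : ∀ k, ∑ j, Z1 k j = 1) (hZ2row : ∀ k, ∑ j, Z2 k j = 1)
    (hZ1col : ∀ j, ∑ k, Z1 k j = (d1 : ℝ)) (hZ2col : ∀ j, ∑ k, Z2 k j = (d2 : ℝ))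
    (w : Fin n → ℝ) (hw : ∀ k, w k = σsq⁻¹)
    (sinv : Fin m1 ⊕ Fin m2 → ℝ)
    (hsinv : sinv = Sum.elim (fun _ => σ1sq⁻¹) (fun _ => σ2sq⁻¹))
    (M : Matrix (Fin m1 ⊕ Fin m2) (Fin m1 ⊕ Fin m2) ℝ)
    (hM : M = Matrix.diagonal sinv
        + (fromCols Z1 Z2)ᵀ * Matrix.diagonal w * fromCols Z1 Z2)
    (Mp : Matrix (Fin m1 ⊕ Fin m2) (Fin m1 ⊕ Fin m2) ℝ)
    (hMp : Mp = Matrix.diagonal (fun i => (Real.sqrt (M i i))⁻¹) * M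
        * Matrix.diagonal (fun i => (Real.sqrt (M i i))⁻¹))
    (hHerm : Mp.IsHermitian) :
    Finset.univ.sup' Finset.univ_nonempty hHerm.eigenvalues
      = 1 + 1 / Real.sqrt ((σsq / (σ1sq * d1) + 1) * (σsq / (σ2sq * d2) + 1))
    ∧ Finset.univ.inf' Finset.univ_nonempty hHerm.eigenvalues
      = 1 - 1 / Real.sqrt ((σsq / (σ1sq * d1) + 1) * (σsq / (σ2sq * d2) + 1)) := by
    classical
  have hd1R : (0:ℝ) < (d1:ℝ) := by exact_mod_cast hd1
  have hd2R : (0:ℝ) < (d2:ℝ) := by exact_mod_cast hd2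
  set c1v : ℝ := σ1sq⁻¹ + (d1:ℝ) * σsq⁻¹ with hc1v
  set c2v : ℝ := σ2sq⁻¹ + (d2:ℝ) * σsq⁻¹ with hc2v
  have hc1 : (0:ℝ) < c1v := by rw [hc1v]; positivity
  have hc2 : (0:ℝ) < c2v := by rw [hc2v]; positivity
  have hs1 : (0:ℝ) < Real.sqrt c1v := Real.sqrt_pos.mpr hc1
  have hs2 : (0:ℝ) < Real.sqrt c2v := Real.sqrt_pos.mpr hc2
  have hs1sq : Real.sqrt c1v * Real.sqrt c1v = c1v := Real.mul_self_sqrt hc1.le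
  have hs2sq : Real.sqrt c2v * Real.sqrt c2v = c2v := Real.mul_self_sqrt hc2.le
  have hsd1 : Real.sqrt (d1:ℝ) * Real.sqrt (d1:ℝ) = (d1:ℝ) := Real.mul_self_sqrt hd1R.le
  have hsd2 : Real.sqrt (d2:ℝ) * Real.sqrt (d2:ℝ) = (d2:ℝ) := Real.mul_self_sqrt hd2R.le
  have hsplit : Real.sqrt ((d1:ℝ) * (d2:ℝ)) = Real.sqrt (d1:ℝ) * Real.sqrt (d2:ℝ) :=
    Real.sqrt_mul hd1R.le _
  set e : ℝ := σsq⁻¹ * (Real.sqrt c1v * Real.sqrt c2v)⁻¹ with he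
  have hepos : 0 < e := by rw [he]; positivity
  set ρ : ℝ := e * Real.sqrt ((d1:ℝ) * (d2:ℝ)) with hρ
  have hρpos : 0 < ρ := by
    rw [hρ]
    exact mul_pos hepos (Real.sqrt_pos.mpr (by positivity))
  -- entries of M
  have hprod : ∀ i i', ((fromCols Z1 Z2)ᵀ * Matrix.diagonal w * fromCols Z1 Z2) i i'
      = σsq⁻¹ * ∑ k, fromCols Z1 Z2 k i * fromCols Z1 Z2 k i' := by
    intro i i'
    rw [Matrix.mul_apply, Finset.mul_sum]
    refine Finset.sum_congr rfl fun k _ => ?_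
    rw [Matrix.mul_diagonal, Matrix.transpose_apply, hw k]
    ring
  have hMapp : ∀ i i', M i i' = Matrix.diagonal sinv i i'
      + σsq⁻¹ * ∑ k, fromCols Z1 Z2 k i * fromCols Z1 Z2 k i' := by
    intro i i'
    rw [hM, Matrix.add_apply, hprod]
  have hM11 : ∀ j j', M (Sum.inl j) (Sum.inl j') = if j = j' then c1v else 0 := by
    intro j j'
    rw [hMapp, Matrix.diagonal_apply]
    simp only [fromCols_apply_inl, hsinv, Sum.elim_inl, Sum.inl.injEq]
    rw [aux_col_orth d1 Z1 hZ1bin hZ1row hZ1col]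
    split_ifs with h <;> simp [hc1v, mul_comm]
  have hM22 : ∀ l l', M (Sum.inr l) (Sum.inr l') = if l = l' then c2v else 0 := by
    intro l l'
    rw [hMapp, Matrix.diagonal_apply]
    simp only [fromCols_apply_inr, hsinv, Sum.elim_inr, Sum.inr.injEq]
    rw [aux_col_orth d2 Z2 hZ2bin hZ2row hZ2col]
    split_ifs with h <;> simp [hc2v, mul_comm]
  have hM12 : ∀ j l, M (Sum.inl j) (Sum.inr l) = σsq⁻¹ * ∑ k, Z1 k j * Z2 k l := by
    intro j l
    rw [hMapp, Matrix.diagonal_apply_ne _ (by simp)]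
    simp only [fromCols_apply_inl, fromCols_apply_inr, zero_add]
  have hM21 : ∀ j l, M (Sum.inr l) (Sum.inl j) = σsq⁻¹ * ∑ k, Z1 k j * Z2 k l := by
    intro j l
    rw [hMapp, Matrix.diagonal_apply_ne _ (by simp)]
    simp only [fromCols_apply_inl, fromCols_apply_inr, zero_add]
    congr 1
    exact Finset.sum_congr rfl fun k _ => mul_comm _ _
  have hMd1 : ∀ j, M (Sum.inl j) (Sum.inl j) = c1v := fun j => by rw [hM11, if_pos rfl]
  have hMd2 : ∀ l, M (Sum.inr l) (Sum.inr l) = c2v := fun l => by rw [hM22, if_pos rfl]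
  -- entries of Mp
  have hMpapp : ∀ i i', Mp i i' = (Real.sqrt (M i i))⁻¹ * M i i' * (Real.sqrt (M i' i'))⁻¹ := by
    intro i i'
    rw [hMp, Matrix.mul_diagonal, Matrix.diagonal_mul]
  have hMp11 : ∀ j j', Mp (Sum.inl j) (Sum.inl j') = if j = j' then 1 else 0 := by
    intro j j'
    rw [hMpapp, hMd1 j, hMd1 j', hM11]
    split_ifs with h
    · field_simp
      exact (Real.sq_sqrt hc1.le).symm
    · ring
  have hMp22 : ∀ l l', Mp (Sum.inr l) (Sum.inr l') = if l = l' then 1 else 0 := by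
    intro l l'
    rw [hMpapp, hMd2 l, hMd2 l', hM22]
    split_ifs with h
    · field_simp
      exact (Real.sq_sqrt hc2.le).symm
    · ring
  have hMp12 : ∀ j l, Mp (Sum.inl j) (Sum.inr l) = e * ∑ k, Z1 k j * Z2 k l := by
    intro j l
    rw [hMpapp, hMd1 j, hMd2 l, hM12, he, mul_inv]
    ring
  have hMp21 : ∀ j l, Mp (Sum.inr l) (Sum.inl j) = e * ∑ k, Z1 k j * Z2 k l := by
    intro j l
    rw [hMpapp, hMd2 l, hMd1 j, hM21, he, mul_inv]
    ring
  -- quadratic form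
  have hquad : ∀ z : Fin m1 ⊕ Fin m2 → ℝ,
      z ⬝ᵥ (Mp *ᵥ z) = ((∑ j, z (Sum.inl j) ^ 2) + ∑ l, z (Sum.inr l) ^ 2)
        + 2 * e * ∑ k, (∑ j, Z1 k j * z (Sum.inl j)) * (∑ l, Z2 k l * z (Sum.inr l)) := by
    intro z
    have expand : z ⬝ᵥ (Mp *ᵥ z) = ∑ i, ∑ i', z i * (Mp i i' * z i') := by
      simp only [dotProduct, mulVec, Finset.mul_sum]
    have inner1 : ∀ j, ∑ i', z (Sum.inl j) * (Mp (Sum.inl j) i' * z i')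
        = z (Sum.inl j) ^ 2
          + e * ∑ l, z (Sum.inl j) * (∑ k, Z1 k j * Z2 k l) * z (Sum.inr l) := by
      intro j
      rw [Fintype.sum_sum_type]
      congr 1
      · rw [Finset.sum_eq_single j]
        · rw [hMp11, if_pos rfl]; ring
        · intro b _ hb
          rw [hMp11, if_neg (Ne.symm hb)]; ring
        · simp
      · rw [Finset.mul_sum]
        refine Finset.sum_congr rfl fun l _ => ?_
        rw [hMp12]; ring
    have inner2 : ∀ l, ∑ i', z (Sum.inr l) * (Mp (Sum.inr l) i' * z i')
        = z (Sum.inr l) ^ 2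
          + e * ∑ j, z (Sum.inl j) * (∑ k, Z1 k j * Z2 k l) * z (Sum.inr l) := by
      intro l
      rw [Fintype.sum_sum_type]
      rw [add_comm]
      congr 1
      · rw [Finset.sum_eq_single l]
        · rw [hMp22, if_pos rfl]; ring
        · intro b _ hb
          rw [hMp22, if_neg (Ne.symm hb)]; ring
        · simp
      · rw [Finset.mul_sum]
        refine Finset.sum_congr rfl fun j _ => ?_
        rw [hMp21]; ring
    rw [expand, Fintype.sum_sum_type]
    simp_rw [inner1, inner2]
    rw [Finset.sum_add_distrib, Finset.sum_add_distrib, ← Finset.mul_sum, ← Finset.mul_sum]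
    have hsw := aux_swap Z1 Z2 (fun j => z (Sum.inl j)) (fun l => z (Sum.inr l))
    have hswap2 : ∑ l, ∑ j, z (Sum.inl j) * (∑ k, Z1 k j * Z2 k l) * z (Sum.inr l)
        = ∑ j, ∑ l, z (Sum.inl j) * (∑ k, Z1 k j * Z2 k l) * z (Sum.inr l) := Finset.sum_comm
    rw [hswap2, hsw]
    ring
  have hdot : ∀ z : Fin m1 ⊕ Fin m2 → ℝ,
      z ⬝ᵥ z = (∑ j, z (Sum.inl j) ^ 2) + ∑ l, z (Sum.inr l) ^ 2 := by
    intro z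
    simp [dotProduct, Fintype.sum_sum_type, sq]
  -- uniform bound on the quadratic form
  have hbound : ∀ z : Fin m1 ⊕ Fin m2 → ℝ,
      |z ⬝ᵥ (Mp *ᵥ z) - z ⬝ᵥ z| ≤ ρ * (z ⬝ᵥ z) := by
    intro z
    have hu := aux_sum_sq d1 Z1 hZ1bin hZ1row hZ1col (fun j => z (Sum.inl j))
    have hv := aux_sum_sq d2 Z2 hZ2bin hZ2row hZ2col (fun l => z (Sum.inr l))
    set X : ℝ := ∑ j, z (Sum.inl j) ^ 2 with hX
    set Y : ℝ := ∑ l, z (Sum.inr l) ^ 2 with hY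
    set S : ℝ := ∑ k, (∑ j, Z1 k j * z (Sum.inl j)) * (∑ l, Z2 k l * z (Sum.inr l)) with hS
    have hXpos : 0 ≤ X := by rw [hX]; positivity
    have hYpos : 0 ≤ Y := by rw [hY]; positivity
    have heq : z ⬝ᵥ (Mp *ᵥ z) - z ⬝ᵥ z = 2 * e * S := by
      rw [hquad z, hdot z]; ring
    rw [heq, hdot z]
    have hS2 : S ^ 2 ≤ ((d1:ℝ) * X) * ((d2:ℝ) * Y) := by
      calc S ^ 2 ≤ (∑ k, (∑ j, Z1 k j * z (Sum.inl j)) ^ 2)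
            * ∑ k, (∑ l, Z2 k l * z (Sum.inr l)) ^ 2 :=
          Finset.sum_mul_sq_le_sq_mul_sq _ _ _
        _ = ((d1:ℝ) * X) * ((d2:ℝ) * Y) := by rw [hu, hv]
    have hSabs : |S| ≤ Real.sqrt (d1:ℝ) * Real.sqrt (d2:ℝ) * (Real.sqrt X * Real.sqrt Y) := by
      rw [← Real.sqrt_sq_eq_abs]
      calc Real.sqrt (S ^ 2) ≤ Real.sqrt (((d1:ℝ) * X) * ((d2:ℝ) * Y)) := Real.sqrt_le_sqrt hS2
        _ = Real.sqrt (d1:ℝ) * Real.sqrt (d2:ℝ) * (Real.sqrt X * Real.sqrt Y) := by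
          rw [Real.sqrt_mul (by positivity), Real.sqrt_mul hd1R.le, Real.sqrt_mul hd2R.le]
          ring
    have h2ab : 2 * (Real.sqrt X * Real.sqrt Y) ≤ X + Y := by
      have := two_mul_le_add_sq (Real.sqrt X) (Real.sqrt Y)
      rw [Real.sq_sqrt hXpos, Real.sq_sqrt hYpos] at this
      linarith
    calc |2 * e * S| = 2 * e * |S| := by
          rw [abs_mul, abs_of_nonneg (by positivity : (0:ℝ) ≤ 2 * e)]
      _ ≤ 2 * e * (Real.sqrt (d1:ℝ) * Real.sqrt (d2:ℝ) * (Real.sqrt X * Real.sqrt Y)) := by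
          apply mul_le_mul_of_nonneg_left hSabs (by positivity)
      _ = (e * (Real.sqrt (d1:ℝ) * Real.sqrt (d2:ℝ))) * (2 * (Real.sqrt X * Real.sqrt Y)) := by
          ring
      _ ≤ (e * (Real.sqrt (d1:ℝ) * Real.sqrt (d2:ℝ))) * (X + Y) :=
          mul_le_mul_of_nonneg_left h2ab (by positivity)
      _ = ρ * (X + Y) := by rw [hρ, hsplit]
  -- per-eigenvalue bounds
  have hev : ∀ i, |hHerm.eigenvalues i - 1| ≤ ρ := by
    intro i
    have h1 := aux_eigenvalue_eq_dot hHerm i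
    have h2 := aux_eigenvector_norm hHerm i
    have h3 := hbound (hHerm.eigenvectorBasis i : Fin m1 ⊕ Fin m2 → ℝ)
    rw [h2] at h3
    rw [h1]
    simpa using h3
  -- explicit extremal eigenvectors
  have hBrow : ∀ j, ∑ l, ∑ k, Z1 k j * Z2 k l = (d1:ℝ) := by
    intro j
    rw [Finset.sum_comm]
    have : ∀ k, ∑ l, Z1 k j * Z2 k l = Z1 k j := fun k => by
      rw [← Finset.mul_sum, hZ2row, mul_one]
    simp_rw [this]
    exact hZ1col j
  have hBcol : ∀ l, ∑ j, ∑ k, Z1 k j * Z2 k l = (d2:ℝ) := by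
    intro l
    rw [Finset.sum_comm]
    have : ∀ k, ∑ j, Z1 k j * Z2 k l = Z2 k l := fun k => by
      rw [← Finset.sum_mul, hZ1row, one_mul]
    simp_rw [this]
    exact hZ2col l
  have heig : ∀ s : ℝ, s * s = 1 →
      Mp *ᵥ (Sum.elim (fun _ => Real.sqrt (d1:ℝ)) (fun _ => s * Real.sqrt (d2:ℝ)))
        = (1 + s * ρ) • (Sum.elim (fun _ => Real.sqrt (d1:ℝ)) (fun _ => s * Real.sqrt (d2:ℝ))) := by
    intro s hs2v
    funext i
    have hexp : ∀ i, (Mp *ᵥ (Sum.elim (fun _ => Real.sqrt (d1:ℝ))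
        (fun _ => s * Real.sqrt (d2:ℝ)))) i
        = ∑ i', Mp i i' * Sum.elim (fun _ => Real.sqrt (d1:ℝ))
            (fun _ => s * Real.sqrt (d2:ℝ)) i' := by
      intro i; rfl
    cases i with
    | inl j =>
      rw [hexp, Fintype.sum_sum_type]
      simp only [Sum.elim_inl, Sum.elim_inr, Pi.smul_apply, smul_eq_mul]
      have t1 : ∑ j', Mp (Sum.inl j) (Sum.inl j') * Real.sqrt (d1:ℝ) = Real.sqrt (d1:ℝ) := by
        rw [Finset.sum_eq_single j]
        · rw [hMp11, if_pos rfl, one_mul]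
        · intro b _ hb; rw [hMp11, if_neg (Ne.symm hb), zero_mul]
        · simp
      have t2 : ∑ l, Mp (Sum.inl j) (Sum.inr l) * (s * Real.sqrt (d2:ℝ))
          = e * (s * Real.sqrt (d2:ℝ)) * (d1:ℝ) := by
        have : ∀ l, Mp (Sum.inl j) (Sum.inr l) * (s * Real.sqrt (d2:ℝ))
            = (e * (s * Real.sqrt (d2:ℝ))) * ∑ k, Z1 k j * Z2 k l := fun l => by
          rw [hMp12]; ring
        simp_rw [this]
        rw [← Finset.mul_sum, hBrow]
      rw [t1, t2, hρ, hsplit]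
      linear_combination (-(e * s * Real.sqrt (d2:ℝ))) * hsd1
    | inr l =>
      rw [hexp, Fintype.sum_sum_type]
      simp only [Sum.elim_inl, Sum.elim_inr, Pi.smul_apply, smul_eq_mul]
      have t1 : ∑ j, Mp (Sum.inr l) (Sum.inl j) * Real.sqrt (d1:ℝ)
          = e * Real.sqrt (d1:ℝ) * (d2:ℝ) := by
        have : ∀ j, Mp (Sum.inr l) (Sum.inl j) * Real.sqrt (d1:ℝ)
            = (e * Real.sqrt (d1:ℝ)) * ∑ k, Z1 k j * Z2 k l := fun j => by
          rw [hMp21]; ring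
        simp_rw [this]
        rw [← Finset.mul_sum, hBcol]
      have t2 : ∑ l', Mp (Sum.inr l) (Sum.inr l') * (s * Real.sqrt (d2:ℝ))
          = s * Real.sqrt (d2:ℝ) := by
        rw [Finset.sum_eq_single l]
        · rw [hMp22, if_pos rfl, one_mul]
        · intro b _ hb; rw [hMp22, if_neg (Ne.symm hb), zero_mul]
        · simp
      rw [t1, t2, hρ, hsplit]
      linear_combination (-(e * Real.sqrt (d1:ℝ))) * hsd2
        + (-(e * Real.sqrt (d1:ℝ) * (Real.sqrt (d2:ℝ) * Real.sqrt (d2:ℝ)))) * hs2v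
  have hm1pos : 0 < m1 := Nat.pos_of_ne_zero (NeZero.ne m1)
  have hznz : ∀ s : ℝ,
      (Sum.elim (fun _ => Real.sqrt (d1:ℝ)) (fun _ => s * Real.sqrt (d2:ℝ)) :
        Fin m1 ⊕ Fin m2 → ℝ) ≠ 0 := by
    intro s h0
    have := congrFun h0 (Sum.inl ⟨0, hm1pos⟩)
    simp only [Sum.elim_inl, Pi.zero_apply] at this
    exact absurd this (ne_of_gt (Real.sqrt_pos.mpr hd1R))
  obtain ⟨iM, hiM⟩ := aux_exists_eigenvalue_eq hHerm (hznz 1) (heig 1 (by norm_num))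
  obtain ⟨im, him⟩ := aux_exists_eigenvalue_eq hHerm (hznz (-1)) (heig (-1) (by norm_num))
  rw [one_mul] at hiM
  have him' : hHerm.eigenvalues im = 1 - ρ := by rw [him]; ring
  -- the closed form of ρ
  have hρrw : 1 / Real.sqrt ((σsq / (σ1sq * (d1:ℝ)) + 1) * (σsq / (σ2sq * (d2:ℝ)) + 1)) = ρ := by
    have hq : Real.sqrt ((d1:ℝ) * (d2:ℝ)) * Real.sqrt ((d1:ℝ) * (d2:ℝ)) = (d1:ℝ) * (d2:ℝ) :=
      Real.mul_self_sqrt (by positivity)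
    have h1 : (ρ⁻¹) ^ 2 = σsq ^ 2 * (c1v * c2v) / ((d1:ℝ) * (d2:ℝ)) := by
      have hinv : ρ⁻¹ = σsq * (Real.sqrt c1v * Real.sqrt c2v) / Real.sqrt ((d1:ℝ) * (d2:ℝ)) := by
        rw [hρ, he, mul_inv, mul_inv, inv_inv, inv_inv]
        ring
      rw [hinv, div_pow, mul_pow, mul_pow, Real.sq_sqrt hc1.le, Real.sq_sqrt hc2.le,
        Real.sq_sqrt (by positivity : (0:ℝ) ≤ (d1:ℝ) * (d2:ℝ))]
    have h2 : (σsq / (σ1sq * (d1:ℝ)) + 1) * (σsq / (σ2sq * (d2:ℝ)) + 1)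
        = σsq ^ 2 * (c1v * c2v) / ((d1:ℝ) * (d2:ℝ)) := by
      rw [hc1v, hc2v]
      field_simp
    rw [h2, ← h1, Real.sqrt_sq (inv_nonneg.mpr hρpos.le), one_div, inv_inv]
  rw [hρrw]
  constructor
  · apply le_antisymm
    · apply Finset.sup'_le
      intro i _
      have := abs_le.mp (hev i)
      linarith [this.2]
    · rw [← hiM]
      exact Finset.le_sup' _ (Finset.mem_univ iM)
  · apply le_antisymm
    · rw [← him']
      exact Finset.inf'_le _ (Finset.mem_univ im)
    · apply Finset.le_inf'
      intro i _
      have := abs_le.mp (hev i)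
      linarith [this.1]
end

section
/- For K grouped random effects, the non-preconditioned matrix Σ^{-1}+Z^T W Z satisfies: (i) 1/max_i(Σ_{ii}) + K·min_i((Z^T W Z)_{ii}) ≤ λ_max ≤ 1/min_i(Σ_{ii}) + K·max_i((Z^T W Z)_{ii}), and (ii) its K−1 smallest eigenvalues all lie in [1/max_i(Σ_{ii}), 1/min_i(Σ_{ii})]. -/
open Matrix Finset

section aux
variable {ι : Type*} [Fintype ι] [DecidableEq ι] {M : Matrix ι ι ℝ} (hM : M.IsHermitian)

noncomputable def coeffs (x : ι → ℝ) : ι → ℝ := fun i => ⇑(hM.eigenvectorBasis i) ⬝ᵥ x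

lemma coeffs_eq (x : ι → ℝ) :
    coeffs hM x = x ᵥ* (hM.eigenvectorUnitary : Matrix ι ι ℝ) := by
  funext i
  simp [coeffs, vecMul, dotProduct, mul_comm]

lemma coeffs_eq' (x : ι → ℝ) :
    coeffs hM x = (star (hM.eigenvectorUnitary : Matrix ι ι ℝ)) *ᵥ x := by
  funext i
  simp [coeffs, mulVec, dotProduct]

lemma dot_expand (x : ι → ℝ) :
    x ⬝ᵥ x = ∑ i, (coeffs hM x i)^2 := by
  have h1 : (hM.eigenvectorUnitary : Matrix ι ι ℝ) * star (hM.eigenvectorUnitary : Matrix ι ι ℝ) = 1 :=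
    (Matrix.mem_unitaryGroup_iff).mp hM.eigenvectorUnitary.2
  have : ∑ i, (coeffs hM x i)^2 = coeffs hM x ⬝ᵥ coeffs hM x := by
    simp [dotProduct, sq]
  have h2 : (star (hM.eigenvectorUnitary : Matrix ι ι ℝ))ᵀ * star (hM.eigenvectorUnitary : Matrix ι ι ℝ) = 1 := by
    have : (star (hM.eigenvectorUnitary : Matrix ι ι ℝ))ᵀ = (hM.eigenvectorUnitary : Matrix ι ι ℝ) := by
      ext i j
      simp [Matrix.star_eq_conjTranspose, Matrix.conjTranspose_apply]
    rw [this, h1]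
  rw [this, coeffs_eq' hM x, Matrix.dotProduct_mulVec, vecMul_mulVec, h2, vecMul_one]

lemma quad_expand (x : ι → ℝ) :
    x ⬝ᵥ (M *ᵥ x) = ∑ i, hM.eigenvalues i * (coeffs hM x i)^2 := by
  have hst := hM.spectral_theorem
  have hdiag : Matrix.diagonal (RCLike.ofReal ∘ hM.eigenvalues) = Matrix.diagonal hM.eigenvalues := by
    simp [Function.comp]
  rw [hdiag, Unitary.conjStarAlgAut_apply] at hst
  conv_lhs => rw [hst]
  rw [← Matrix.mulVec_mulVec, Matrix.dotProduct_mulVec, ← vecMul_vecMul,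
    ← coeffs_eq hM x, ← coeffs_eq' hM x]
  simp only [dotProduct, vecMul_diagonal, sq]
  exact Finset.sum_congr rfl fun i _ => by ring

lemma basis_dot_self (i : ι) :
    ⇑(hM.eigenvectorBasis i) ⬝ᵥ ⇑(hM.eigenvectorBasis i) = 1 := by
  have h := hM.eigenvectorBasis.orthonormal.1 i
  have h2 : (inner ℝ (hM.eigenvectorBasis i) (hM.eigenvectorBasis i) : ℝ) = 1 := by
    rw [real_inner_self_eq_norm_sq, h]; norm_num
  rw [← h2, PiLp.inner_apply]
  simp [dotProduct, sq]

lemma eig_eq_quad (i : ι) :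
    hM.eigenvalues i = ⇑(hM.eigenvectorBasis i) ⬝ᵥ (M *ᵥ ⇑(hM.eigenvectorBasis i)) := by
  rw [hM.mulVec_eigenvectorBasis, dotProduct_smul, smul_eq_mul, basis_dot_self, mul_one]

lemma eig_hasEigenvalue (i : ι) :
    Module.End.HasEigenvalue (Matrix.toLin' M) (hM.eigenvalues i) := by
  apply Module.End.hasEigenvalue_of_hasEigenvector (x := ⇑(hM.eigenvectorBasis i))
  constructor
  · rw [Module.End.mem_eigenspace_iff, Matrix.toLin'_apply, hM.mulVec_eigenvectorBasis]
  · intro h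
    apply hM.eigenvectorBasis.toBasis.ne_zero i
    have : ⇑(hM.eigenvectorBasis.toBasis i) = ⇑(hM.eigenvectorBasis i) := by
      simp
    ext j
    exact congrFun h j

end aux

/-- For `K` grouped random effects, the non-preconditioned matrix
`M = Σ⁻¹ + ZᵀWZ` satisfies
(i) `1/max_i(Σ_{ii}) + K·min_i((ZᵀWZ)_{ii}) ≤ λ_max ≤ 1/min_i(Σ_{ii}) + K·max_i((ZᵀWZ)_{ii})`,
and (ii) its `K−1` smallest eigenvalues (the first `K−1` in any increasing enumeration
with multiplicity) all lie in `[1/max_i(Σ_{ii}), 1/min_i(Σ_{ii})]`. -/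
theorem stmt10 {n K : ℕ} {m : Fin K → ℕ}
    (hne : (Finset.univ : Finset ((k : Fin K) × Fin (m k))).Nonempty)
    (w : Fin n → ℝ) (hw : ∀ l, 0 < w l)
    (s : (k : Fin K) × Fin (m k) → ℝ) (hs : ∀ i, 0 < s i)
    (Z : Matrix (Fin n) ((k : Fin K) × Fin (m k)) ℝ)
    (hZbin : ∀ l i, Z l i = 0 ∨ Z l i = 1)
    (hZrow : ∀ l (k : Fin K), ∑ j : Fin (m k), Z l ⟨k, j⟩ = 1)
    (M : Matrix ((k : Fin K) × Fin (m k)) ((k : Fin K) × Fin (m k)) ℝ)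
    (hM : M = Matrix.diagonal (fun i => (s i)⁻¹) + Zᵀ * Matrix.diagonal w * Z)
    (hHerm : M.IsHermitian) :
    ((Finset.univ.sup' hne s)⁻¹
        + K * (Finset.univ.inf' hne fun i => (Zᵀ * Matrix.diagonal w * Z) i i)
      ≤ Finset.univ.sup' hne hHerm.eigenvalues
    ∧ Finset.univ.sup' hne hHerm.eigenvalues
      ≤ (Finset.univ.inf' hne s)⁻¹
        + K * (Finset.univ.sup' hne fun i => (Zᵀ * Matrix.diagonal w * Z) i i))
    ∧ ∀ e : Fin (Fintype.card ((k : Fin K) × Fin (m k))) ≃ ((k : Fin K) × Fin (m k)),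
      Monotone (fun t => hHerm.eigenvalues (e t)) →
      ∀ t : Fin (Fintype.card ((k : Fin K) × Fin (m k))), (t : ℕ) < K - 1 →
        (Finset.univ.sup' hne s)⁻¹ ≤ hHerm.eigenvalues (e t)
        ∧ hHerm.eigenvalues (e t) ≤ (Finset.univ.inf' hne s)⁻¹ := by
  classical
  have hsup_pos : 0 < Finset.univ.sup' hne s := by
    obtain ⟨i0, _⟩ := hne
    exact lt_of_lt_of_le (hs i0) (Finset.le_sup' s (Finset.mem_univ i0))
  have hinf_pos : 0 < Finset.univ.inf' hne s := by
    rw [Finset.lt_inf'_iff]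
    exact fun i _ => hs i
  have hAentry : ∀ i j, (Zᵀ * Matrix.diagonal w * Z) i j = ∑ l, w l * (Z l i * Z l j) := by
    intro i j
    rw [Matrix.mul_apply]
    refine Finset.sum_congr rfl fun l _ => ?_
    rw [Matrix.mul_diagonal, Matrix.transpose_apply]
    ring
  have hZ01 : ∀ l i, 0 ≤ Z l i := by
    intro l i; rcases hZbin l i with h | h <;> rw [h] <;> norm_num
  have hZsq : ∀ l i, Z l i * Z l i = Z l i := by
    intro l i; rcases hZbin l i with h | h <;> rw [h] <;> ring
  have hAnonneg : ∀ i j, 0 ≤ (Zᵀ * Matrix.diagonal w * Z) i j := by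
    intro i j; rw [hAentry]
    exact Finset.sum_nonneg fun l _ =>
      mul_nonneg (hw l).le (mul_nonneg (hZ01 l i) (hZ01 l j))
  have hZtotal : ∀ l, ∑ i : (k : Fin K) × Fin (m k), Z l i = K := by
    intro l
    rw [← Finset.univ_sigma_univ, Finset.sum_sigma]
    simp [hZrow l]
  have hArow : ∀ i, ∑ j, (Zᵀ * Matrix.diagonal w * Z) i j = K * (Zᵀ * Matrix.diagonal w * Z) i i := by
    intro i
    calc ∑ j, (Zᵀ * Matrix.diagonal w * Z) i j
        = ∑ j, ∑ l, w l * (Z l i * Z l j) := Finset.sum_congr rfl fun j _ => hAentry i j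
      _ = ∑ l, ∑ j : (k : Fin K) × Fin (m k), w l * (Z l i * Z l j) := Finset.sum_comm
      _ = ∑ l, w l * Z l i * K := by
          refine Finset.sum_congr rfl fun l _ => ?_
          have h : ∀ j, w l * (Z l i * Z l j) = (w l * Z l i) * Z l j := fun j => by ring
          simp_rw [h]
          rw [← Finset.mul_sum, hZtotal l]
      _ = K * (Zᵀ * Matrix.diagonal w * Z) i i := by
          rw [hAentry, Finset.mul_sum]
          refine Finset.sum_congr rfl fun l _ => ?_
          rw [hZsq]; ring
  have hMq : ∀ x, x ⬝ᵥ (M *ᵥ x)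
      = x ⬝ᵥ (Matrix.diagonal (fun i => (s i)⁻¹) *ᵥ x) + x ⬝ᵥ ((Zᵀ * Matrix.diagonal w * Z) *ᵥ x) := by
    intro x; rw [hM, Matrix.add_mulVec, dotProduct_add]
  have hqA : ∀ x, x ⬝ᵥ ((Zᵀ * Matrix.diagonal w * Z) *ᵥ x)
      = ∑ l, w l * ((Z *ᵥ x) l * (Z *ᵥ x) l) := by
    intro x
    rw [← Matrix.mulVec_mulVec, ← Matrix.mulVec_mulVec, Matrix.dotProduct_mulVec,
      Matrix.vecMul_transpose]
    simp [dotProduct, Matrix.mulVec_diagonal]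
    exact Finset.sum_congr rfl fun l _ => by ring
  have hqA_nonneg : ∀ x, 0 ≤ x ⬝ᵥ ((Zᵀ * Matrix.diagonal w * Z) *ᵥ x) := by
    intro x; rw [hqA]
    exact Finset.sum_nonneg fun l _ => mul_nonneg (hw l).le (mul_self_nonneg _)
  have hqD : ∀ x, x ⬝ᵥ (Matrix.diagonal (fun i => (s i)⁻¹) *ᵥ x)
      = ∑ i, (s i)⁻¹ * (x i * x i) := by
    intro x
    simp [dotProduct, Matrix.mulVec_diagonal]
    exact Finset.sum_congr rfl fun i _ => by ring
  have hDle : ∀ x, x ⬝ᵥ (Matrix.diagonal (fun i => (s i)⁻¹) *ᵥ x)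
      ≤ (Finset.univ.inf' hne s)⁻¹ * (x ⬝ᵥ x) := by
    intro x
    rw [hqD]
    have : (Finset.univ.inf' hne s)⁻¹ * (x ⬝ᵥ x) = ∑ i, (Finset.univ.inf' hne s)⁻¹ * (x i * x i) := by
      rw [dotProduct, Finset.mul_sum]
    rw [this]
    refine Finset.sum_le_sum fun i _ => ?_
    refine mul_le_mul_of_nonneg_right ?_ (mul_self_nonneg _)
    exact inv_anti₀ hinf_pos (Finset.inf'_le s (Finset.mem_univ i))
  have hDge : ∀ x, (Finset.univ.sup' hne s)⁻¹ * (x ⬝ᵥ x)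
      ≤ x ⬝ᵥ (Matrix.diagonal (fun i => (s i)⁻¹) *ᵥ x) := by
    intro x
    rw [hqD]
    have : (Finset.univ.sup' hne s)⁻¹ * (x ⬝ᵥ x) = ∑ i, (Finset.univ.sup' hne s)⁻¹ * (x i * x i) := by
      rw [dotProduct, Finset.mul_sum]
    rw [this]
    refine Finset.sum_le_sum fun i _ => ?_
    refine mul_le_mul_of_nonneg_right ?_ (mul_self_nonneg _)
    exact inv_anti₀ (hs i) (Finset.le_sup' s (Finset.mem_univ i))
  have hlower : ∀ i, (Finset.univ.sup' hne s)⁻¹ ≤ hHerm.eigenvalues i := by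
    intro i
    have h1 := eig_eq_quad hHerm i
    have h2 := hMq (⇑(hHerm.eigenvectorBasis i))
    have h3 := hDge (⇑(hHerm.eigenvectorBasis i))
    have h4 := hqA_nonneg (⇑(hHerm.eigenvectorBasis i))
    have h5 := basis_dot_self hHerm i
    rw [h5, mul_one] at h3
    linarith
  constructor
  · constructor
    · -- lower bound on sup' of eigenvalues
      have hcard : 0 < (Fintype.card ((k : Fin K) × Fin (m k)) : ℝ) := by
        have : 0 < Fintype.card ((k : Fin K) × Fin (m k)) :=
          Fintype.card_pos_iff.mpr ⟨hne.choose⟩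
        exact_mod_cast this
      set x : (k : Fin K) × Fin (m k) → ℝ := fun _ => 1 with hxdef
      have hxx : x ⬝ᵥ x = (Fintype.card ((k : Fin K) × Fin (m k)) : ℝ) := by
        simp [dotProduct, hxdef]
      have hqAx : x ⬝ᵥ ((Zᵀ * Matrix.diagonal w * Z) *ᵥ x)
          = ∑ i, (K : ℝ) * (Zᵀ * Matrix.diagonal w * Z) i i := by
        have : x ⬝ᵥ ((Zᵀ * Matrix.diagonal w * Z) *ᵥ x)
            = ∑ i, ∑ j, (Zᵀ * Matrix.diagonal w * Z) i j := by
          simp [dotProduct, Matrix.mulVec, hxdef]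
        rw [this]
        exact Finset.sum_congr rfl fun i _ => hArow i
      have hq1 : x ⬝ᵥ (M *ᵥ x) = ∑ i, ((s i)⁻¹ + (K : ℝ) * (Zᵀ * Matrix.diagonal w * Z) i i) := by
        rw [hMq, hqD, hqAx, ← Finset.sum_add_distrib]
        exact Finset.sum_congr rfl fun i _ => by simp [hxdef]
      have hlo : (Fintype.card ((k : Fin K) × Fin (m k)) : ℝ)
            * ((Finset.univ.sup' hne s)⁻¹
              + K * (Finset.univ.inf' hne fun i => (Zᵀ * Matrix.diagonal w * Z) i i))
          ≤ x ⬝ᵥ (M *ᵥ x) := by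
        rw [hq1]
        rw [show (Fintype.card ((k : Fin K) × Fin (m k)) : ℝ)
            * ((Finset.univ.sup' hne s)⁻¹
              + K * (Finset.univ.inf' hne fun i => (Zᵀ * Matrix.diagonal w * Z) i i))
            = ∑ _i : (k : Fin K) × Fin (m k), ((Finset.univ.sup' hne s)⁻¹
              + K * (Finset.univ.inf' hne fun i => (Zᵀ * Matrix.diagonal w * Z) i i)) by
          rw [Finset.sum_const, nsmul_eq_mul, Finset.card_univ]]
        refine Finset.sum_le_sum fun i _ => ?_
        have h1 : (Finset.univ.sup' hne s)⁻¹ ≤ (s i)⁻¹ :=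
          inv_anti₀ (hs i) (Finset.le_sup' s (Finset.mem_univ i))
        have h2 : (Finset.univ.inf' hne fun i => (Zᵀ * Matrix.diagonal w * Z) i i)
            ≤ (Zᵀ * Matrix.diagonal w * Z) i i :=
          Finset.inf'_le _ (Finset.mem_univ i)
        have hK : (0:ℝ) ≤ K := Nat.cast_nonneg K
        nlinarith
      have hhi : x ⬝ᵥ (M *ᵥ x)
          ≤ (Finset.univ.sup' hne hHerm.eigenvalues) * (Fintype.card ((k : Fin K) × Fin (m k)) : ℝ) := by
        rw [quad_expand hHerm x, ← hxx, dot_expand hHerm x, Finset.mul_sum]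
        refine Finset.sum_le_sum fun i _ => ?_
        exact mul_le_mul_of_nonneg_right
          (Finset.le_sup' hHerm.eigenvalues (Finset.mem_univ i)) (sq_nonneg _)
      rw [mul_comm] at hhi
      exact le_of_mul_le_mul_left (hlo.trans hhi) hcard
    · -- upper bound on sup' of eigenvalues (Gershgorin)
      refine Finset.sup'_le hne _ fun i _ => ?_
      obtain ⟨k, hk⟩ := eigenvalue_mem_ball (eig_hasEigenvalue hHerm i)
      rw [Metric.mem_closedBall, Real.dist_eq] at hk
      have h1 : hHerm.eigenvalues i ≤ M k k + ∑ j ∈ Finset.univ.erase k, ‖M k j‖ := by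
        have := abs_le.mp hk
        linarith [this.2]
      have hMoff : ∀ j, j ≠ k → M k j = (Zᵀ * Matrix.diagonal w * Z) k j := by
        intro j hj
        rw [hM]
        simp [Matrix.add_apply, Matrix.diagonal_apply_ne _ (Ne.symm hj)]
      have h2 : ∑ j ∈ Finset.univ.erase k, ‖M k j‖ = ∑ j ∈ Finset.univ.erase k, M k j := by
        refine Finset.sum_congr rfl fun j hj => ?_
        have hjk : j ≠ k := Finset.ne_of_mem_erase hj
        rw [Real.norm_eq_abs, abs_of_nonneg]
        rw [hMoff j hjk]
        exact hAnonneg k j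
      have h3 : M k k + ∑ j ∈ Finset.univ.erase k, M k j = ∑ j, M k j :=
        Finset.add_sum_erase _ _ (Finset.mem_univ k)
      have h4 : ∑ j, M k j = (s k)⁻¹ + (K:ℝ) * (Zᵀ * Matrix.diagonal w * Z) k k := by
        rw [hM]
        simp only [Matrix.add_apply]
        rw [Finset.sum_add_distrib, hArow k]
        congr 1
        simp [Matrix.diagonal_apply, Finset.sum_ite_eq]
      have h5 : (s k)⁻¹ ≤ (Finset.univ.inf' hne s)⁻¹ :=
        inv_anti₀ hinf_pos (Finset.inf'_le s (Finset.mem_univ k))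
      have h6 : (Zᵀ * Matrix.diagonal w * Z) k k
          ≤ Finset.univ.sup' hne fun i => (Zᵀ * Matrix.diagonal w * Z) i i :=
        Finset.le_sup' (fun i => (Zᵀ * Matrix.diagonal w * Z) i i) (Finset.mem_univ k)
      have hK : (0:ℝ) ≤ K := Nat.cast_nonneg K
      rw [h2, h3, h4] at h1
      nlinarith
  · intro e hmono t ht
    refine ⟨hlower (e t), ?_⟩
    rcases Nat.eq_zero_or_pos n with hn | hn
    · -- n = 0 : the `A` part of the quadratic form vanishes identically
      subst hn
      have h1 := eig_eq_quad hHerm (e t)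
      have h2 := hMq (⇑(hHerm.eigenvectorBasis (e t)))
      have hAz : (⇑(hHerm.eigenvectorBasis (e t))) ⬝ᵥ
          ((Zᵀ * Matrix.diagonal w * Z) *ᵥ ⇑(hHerm.eigenvectorBasis (e t))) = 0 := by
        rw [hqA]; simp
      have h3 := hDle (⇑(hHerm.eigenvectorBasis (e t)))
      have h5 := basis_dot_self hHerm (e t)
      rw [h5, mul_one] at h3
      linarith
    · -- n > 0 : all groups are nonempty
      have hm : ∀ k : Fin K, 0 < m k := by
        intro k
        rcases Nat.eq_zero_or_pos (m k) with h0 | h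
        · exfalso
          have h1 := hZrow ⟨0, hn⟩ k
          haveI : IsEmpty (Fin (m k)) := by rw [h0]; infer_instance
          rw [Finset.univ_eq_empty, Finset.sum_empty] at h1
          exact zero_ne_one h1
        · exact h
      -- the "blockwise constant" embedding
      let φ : (Fin K → ℝ) →ₗ[ℝ] ((k : Fin K) × Fin (m k)) → ℝ :=
        { toFun := fun c i => c i.1
          map_add' := fun a b => rfl
          map_smul' := fun r a => rfl }
      have hφZ : ∀ c : Fin K → ℝ, (∑ k, c k = 0) → Z *ᵥ (φ c) = 0 := by
        intro c hc
        funext l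
        show Z l ⬝ᵥ (φ c) = 0
        rw [dotProduct, ← Finset.univ_sigma_univ, Finset.sum_sigma]
        have hblk : ∀ k : Fin K, ∑ j : Fin (m k), Z l ⟨k, j⟩ * (φ c) ⟨k, j⟩ = c k := by
          intro k
          calc ∑ j : Fin (m k), Z l ⟨k, j⟩ * (φ c) ⟨k, j⟩
              = ∑ j : Fin (m k), Z l ⟨k, j⟩ * c k := Finset.sum_congr rfl fun j _ => rfl
            _ = (∑ j : Fin (m k), Z l ⟨k, j⟩) * c k := by rw [Finset.sum_mul]
            _ = c k := by rw [hZrow l k, one_mul]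
        rw [Finset.sum_congr rfl fun k _ => hblk k]
        exact hc
      -- the constraint linear map
      let G : (Fin K → ℝ) →ₗ[ℝ] ℝ × (Fin (t : ℕ) → ℝ) :=
        { toFun := fun c => (∑ k, c k,
            fun r => coeffs hHerm (φ c) (e ⟨r.1, lt_trans r.isLt t.isLt⟩))
          map_add' := fun a b => by
            refine Prod.ext ?_ ?_
            · simp [Finset.sum_add_distrib]
            · funext r
              simp [coeffs, map_add, dotProduct_add]
          map_smul' := fun r a => by
            refine Prod.ext ?_ ?_
            · simp [Finset.mul_sum]
            · funext q
              simp [coeffs, _root_.map_smul, dotProduct_smul, smul_eq_mul] }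
      have hKpos : 0 < K := hne.choose.1.pos
      have hrank : LinearMap.ker G ≠ ⊥ := by
        apply LinearMap.ker_ne_bot_of_finrank_lt
        have hd : Module.finrank ℝ (Fin K → ℝ) = K := by
          simp [Module.finrank_pi]
        have hc : Module.finrank ℝ (ℝ × (Fin (t : ℕ) → ℝ)) = 1 + (t : ℕ) := by
          simp [Module.finrank_prod, Module.finrank_pi, Module.finrank_self]
        rw [hd, hc]
        omega
      obtain ⟨c, hcker, hc0⟩ := (Submodule.ne_bot_iff _).mp hrank
      have hGc : G c = 0 := LinearMap.mem_ker.mp hcker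
      have hsum : ∑ k, c k = 0 := congrArg Prod.fst hGc
      have hcoef0 : ∀ r : Fin (t : ℕ),
          coeffs hHerm (φ c) (e ⟨r.1, lt_trans r.isLt t.isLt⟩) = 0 :=
        fun r => congrFun (congrArg Prod.snd hGc) r
      have hZx : Z *ᵥ (φ c) = 0 := hφZ c hsum
      have hqAx : (φ c) ⬝ᵥ ((Zᵀ * Matrix.diagonal w * Z) *ᵥ (φ c)) = 0 := by
        rw [hqA]; simp [hZx]
      have hxpos : 0 < (φ c) ⬝ᵥ (φ c) := by
        obtain ⟨k0, hk0⟩ : ∃ k0, c k0 ≠ 0 := by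
          by_contra h
          push_neg at h
          exact hc0 (funext h)
        rw [dotProduct]
        refine Finset.sum_pos' (fun i _ => mul_self_nonneg _)
          ⟨⟨k0, ⟨0, hm k0⟩⟩, Finset.mem_univ _, ?_⟩
        exact mul_self_pos.mpr hk0
      have hge : hHerm.eigenvalues (e t) * ((φ c) ⬝ᵥ (φ c)) ≤ (φ c) ⬝ᵥ (M *ᵥ (φ c)) := by
        rw [quad_expand hHerm (φ c), dot_expand hHerm (φ c), Finset.mul_sum]
        rw [← Equiv.sum_comp e (fun i => hHerm.eigenvalues (e t) * (coeffs hHerm (φ c) i)^2),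
            ← Equiv.sum_comp e (fun i => hHerm.eigenvalues i * (coeffs hHerm (φ c) i)^2)]
        refine Finset.sum_le_sum fun t' _ => ?_
        rcases le_or_gt t t' with h | h
        · exact mul_le_mul_of_nonneg_right (hmono h) (sq_nonneg _)
        · have heq : (⟨t'.1, lt_trans (show t'.1 < (t:ℕ) from h) t.isLt⟩ :
              Fin (Fintype.card ((k : Fin K) × Fin (m k)))) = t' := Fin.ext rfl
          have h0 := hcoef0 ⟨t'.1, h⟩
          rw [heq] at h0
          rw [h0]
          simp
      have hle : (φ c) ⬝ᵥ (M *ᵥ (φ c)) ≤ (Finset.univ.inf' hne s)⁻¹ * ((φ c) ⬝ᵥ (φ c)) := by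
        rw [hMq, hqAx, add_zero]
        exact hDle (φ c)
      have hfin := hge.trans hle
      exact le_of_mul_le_mul_right (by linarith) hxpos
end

section
/- For K=2, Gaussian likelihood, and balanced design with d repeated observations per random effect, the SSOR preconditioner strictly dominates the diagonal preconditioner at the extremes: λ_max^SSOR < λ_max^Diag and λ_min^SSOR > λ_min^Diag. -/
/-- For `K = 2`, Gaussian likelihood, and balanced design with `d`
repeated observations per random effect, the SSOR preconditioner strictly dominates the
diagonal preconditioner at the extremes: with
`λ_max^SSOR = 1`, `λ_min^SSOR = 1 − (1/(σ²/(σ1²d)+1))·(1/(σ²/(σ2²d)+1))`,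
`λ_max^Diag = 1 + 1/√((σ²/(σ1²d)+1)(σ²/(σ2²d)+1))` and
`λ_min^Diag = 1 − 1/√((σ²/(σ1²d)+1)(σ²/(σ2²d)+1))`, we have
`λ_max^SSOR < λ_max^Diag` and `λ_min^SSOR > λ_min^Diag`. -/
theorem stmt13 (σsq σ1sq σ2sq d : ℝ) (hσ : 0 < σsq) (hσ1 : 0 < σ1sq) (hσ2 : 0 < σ2sq)
    (hd : 0 < d) :
    (1 : ℝ) < 1 + 1 / Real.sqrt ((σsq / (σ1sq * d) + 1) * (σsq / (σ2sq * d) + 1))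
    ∧ 1 - 1 / Real.sqrt ((σsq / (σ1sq * d) + 1) * (σsq / (σ2sq * d) + 1))
      < 1 - (1 / (σsq / (σ1sq * d) + 1)) * (1 / (σsq / (σ2sq * d) + 1)) := by
  have ha : 1 < σsq / (σ1sq * d) + 1 := by
    have := div_pos hσ (mul_pos hσ1 hd); linarith
  have hb : 1 < σsq / (σ2sq * d) + 1 := by
    have := div_pos hσ (mul_pos hσ2 hd); linarith
  have hab : 1 < (σsq / (σ1sq * d) + 1) * (σsq / (σ2sq * d) + 1) :=
    one_lt_mul_of_lt_of_le ha hb.le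
  have hs : Real.sqrt ((σsq / (σ1sq * d) + 1) * (σsq / (σ2sq * d) + 1))
      < (σsq / (σ1sq * d) + 1) * (σsq / (σ2sq * d) + 1) := by
    rw [Real.sqrt_lt' (by linarith)]; nlinarith
  have hs0 : 0 < Real.sqrt ((σsq / (σ1sq * d) + 1) * (σsq / (σ2sq * d) + 1)) :=
    Real.sqrt_pos.mpr (by linarith)
  constructor
  · linarith [div_pos one_pos hs0]
  · have : (1 / (σsq / (σ1sq * d) + 1)) * (1 / (σsq / (σ2sq * d) + 1))
        = 1 / ((σsq / (σ1sq * d) + 1) * (σsq / (σ2sq * d) + 1)) := by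
      rw [div_mul_div_comm, one_mul]
    rw [this]
    have := one_div_lt_one_div_of_lt hs0 hs
    linarith
end
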